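/- arXiv:1408.1521 — 4 statements merged into one kernel-verified Lean document; each statement's English description precedes it below -/
import Mathlib

section
/- Let S_V be a set of elements of the free group F on countably many generators, and let V be the class of groups satisfying all identities w = 1 for w ∈ S_V. Assume V is nontrivial (it contains a group with more than one element) and that there is a group D ∈ V generated by m elements which discriminates the relatively free group of V, in the sense that for every finite set W of elements of F such that no w ∈ W is an identity of all groups in V, there exists a homomorphism F → D sending every w ∈ W to a nontrivial element. Then for every set S_U of elements of F (defining a variety U), there exists a group H₀ generated by m + 1 elements with H₀ ∈ UV (i.e., H₀ has a normal subgroup satisfying all identities of S_U with quotient satisfying all identities of S_V) such that for every finite set W of elements of F in which no w is an identity of all groups in UV, there is a homomorphism F → H₀ sending every w ∈ W to a nontrivial element. In particular, the basis rank of the product UV is at most m + 1. -/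
/-- A group `G` satisfies all the identities `w = 1` for `w ∈ S`. -/
def Sat (S : Set (FreeGroup ℕ)) (G : Type*) [Group G] : Prop :=
  ∀ w ∈ S, ∀ φ : FreeGroup ℕ →* G, φ w = 1

/-- `G` is generated by at most `d` elements. -/
def GeneratedBy (d : ℕ) (G : Type*) [Group G] : Prop :=
  ∃ s : Finset G, s.card ≤ d ∧ Subgroup.closure (s : Set G) = ⊤

/-- `G` belongs to the product variety `U·V`, where `U` and `V` are the varieties
defined by the sets of words `SU` and `SV`. -/
def MemProd (SU SV : Set (FreeGroup ℕ)) (G : Type*) [Group G] : Prop :=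
  ∃ N : Subgroup G, ∃ hN : N.Normal,
    Sat SU N ∧ (haveI := hN; Sat SV (G ⧸ N))

/-- `w` is an identity of all groups of the variety defined by the set of words `S`. -/
def IsIdOf (S : Set (FreeGroup ℕ)) (w : FreeGroup ℕ) : Prop :=
  ∀ (H : Type) [Group H], Sat S H → ∀ φ : FreeGroup ℕ →* H, φ w = 1

/-- `w` is an identity of all groups of the product variety `U·V`. -/
def IsIdOfProd (SU SV : Set (FreeGroup ℕ)) (w : FreeGroup ℕ) : Prop :=
  ∀ (H : Type) [Group H], MemProd SU SV H → ∀ φ : FreeGroup ℕ →* H, φ w = 1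

namespace PVaux
open FreeGroup Subgroup

abbrev F := FreeGroup ℕ

lemma sat_of_injective {S : Set F} {G H : Type*} [Group G] [Group H]
    (e : H →* G) (he : Function.Injective e) (hG : Sat S G) : Sat S H := by
  intro w hw φ
  apply he
  rw [← MonoidHom.comp_apply, hG w hw (e.comp φ)]
  exact (map_one e).symm


lemma sat_pi {S : Set F} {ι : Type*} {G : ι → Type*} [∀ i, Group (G i)]
    (h : ∀ i, Sat S (G i)) : Sat S (∀ i, G i) := by
  intro w hw φ
  funext i
  exact h i w hw ((Pi.evalMonoidHom G i).comp φ)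

def TU (SU : Set F) : Subgroup F :=
  closure {x | ∃ u ∈ SU, ∃ e : F →* F, x = e u}

instance TU_normal (SU : Set F) : (TU SU).Normal := by
  constructor
  intro x hx g
  induction hx using closure_induction with
  | mem x hx =>
      obtain ⟨u, hu, e, rfl⟩ := hx
      exact subset_closure ⟨u, hu, ((MulAut.conj g).toMonoidHom.comp e), rfl⟩
  | one => simpa using (TU SU).one_mem
  | mul x y hx hy ihx ihy =>
      have := (TU SU).mul_mem ihx ihy
      simpa [mul_assoc] using this
  | inv x hx ih =>
      have := (TU SU).inv_mem ih
      simpa [mul_assoc] using this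

abbrev A (SU : Set F) : Type := F ⧸ TU SU

def agen (SU : Set F) (k : ℕ) : A SU := QuotientGroup.mk (FreeGroup.of k)

lemma sat_A (SU : Set F) : Sat SU (A SU) := by
  intro u hu ψ
  let e : F →* F := FreeGroup.lift (fun n => Quotient.out (ψ (FreeGroup.of n)))
  have he : (QuotientGroup.mk' (TU SU)).comp e = ψ := by
    apply FreeGroup.ext_hom
    intro n
    simp [e, QuotientGroup.mk'_apply, QuotientGroup.out_eq']
  have : e u ∈ TU SU := subset_closure ⟨u, hu, e, rfl⟩
  calc ψ u = (QuotientGroup.mk' (TU SU)) (e u) := by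
        rw [← MonoidHom.comp_apply, he]
  _ = 1 := (QuotientGroup.eq_one_iff _).2 this

/-- universal property of the relatively free `U`-group `A SU`. -/
lemma A_lift (SU : Set F) {N : Type*} [Group N] (hN : Sat SU N) (ν : ℕ → N) :
    ∃ ρ : A SU →* N, ∀ k, ρ (agen SU k) = ν k := by
  have hker : TU SU ≤ (FreeGroup.lift ν).ker := by
    rw [TU, closure_le]
    rintro x ⟨u, hu, e, rfl⟩
    exact hN u hu ((FreeGroup.lift ν).comp e)
  refine ⟨QuotientGroup.lift _ _ hker, fun k => ?_⟩
  simp [agen, QuotientGroup.lift_mk']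


open SemidirectProduct

section W
variable (SU : Set F) (D : Type) [Group D]

def shift : D →* MulAut (D → A SU) where
  toFun e :=
    { toFun := fun g d => g (d * e)
      invFun := fun g d => g (d * e⁻¹)
      left_inv := by intro g; funext d; simp [mul_assoc]
      right_inv := by intro g; funext d; simp [mul_assoc]
      map_mul' := fun g h => rfl }
  map_one' := by ext g d; simp
  map_mul' := by intro e1 e2; ext g d; simp [mul_assoc]

abbrev WrG : Type := (D → A SU) ⋊[shift SU D] D

variable {D}

def fzero (ι : D → ℕ) : D → A SU := fun d => agen SU (ι d)

def gfun (ι : D → ℕ) (t : ℕ → D) (n : ℕ) : D → A SU := shift SU D (t n) (fzero SU ι)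

lemma gfun_apply (ι : D → ℕ) (t : ℕ → D) (n : ℕ) (d : D) :
    gfun SU ι t n d = agen SU (ι (d * t n)) := rfl

def xi (ι : D → ℕ) (t : ℕ → D) (η : F →* D) (n : ℕ) : WrG SU D :=
  ⟨gfun SU ι t n, η (FreeGroup.of n)⟩

noncomputable def chi (ι : D → ℕ) (t : ℕ → D) (η : F →* D) : F →* WrG SU D :=
  FreeGroup.lift (xi SU ι t η)

lemma chi_right (ι : D → ℕ) (t : ℕ → D) (η : F →* D) (w : F) :
    (chi SU ι t η w).right = η w := by
  have : rightHom.comp (chi SU ι t η) = η := by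
    apply FreeGroup.ext_hom
    intro n
    simp [chi, xi, rightHom]
  calc (chi SU ι t η w).right = (rightHom.comp (chi SU ι t η)) w := rfl
  _ = η w := by rw [this]

-- the subgroup H₀
variable (s : Finset D)

def Hsub (ι : D → ℕ) : Subgroup (WrG SU D) :=
  closure ((inr '' (s : Set D)) ∪ {inl (fzero SU ι)})

lemma inr_mem_Hsub (ι : D → ℕ) (hs : closure (s : Set D) = ⊤) (d : D) :
    inr d ∈ Hsub SU s ι := by
  have h1 : d ∈ closure (s : Set D) := by rw [hs]; trivial
  have : (inr d : WrG SU D) ∈ Subgroup.map inr (closure (s : Set D)) :=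
    Subgroup.mem_map_of_mem _ h1
  rw [MonoidHom.map_closure] at this
  exact closure_mono Set.subset_union_left this

lemma inl_fzero_mem_Hsub (ι : D → ℕ) : inl (fzero SU ι) ∈ Hsub SU s ι :=
  subset_closure (Set.mem_union_right _ rfl)

lemma xi_mem_Hsub (ι : D → ℕ) (t : ℕ → D) (η : F →* D)
    (hs : closure (s : Set D) = ⊤) (n : ℕ) : xi SU ι t η n ∈ Hsub SU s ι := by
  have h1 : (inl (gfun SU ι t n) : WrG SU D) ∈ Hsub SU s ι := by
    rw [gfun, inl_aut]
    exact mul_mem (mul_mem (inr_mem_Hsub SU s ι hs _) (inl_fzero_mem_Hsub SU s ι))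
      ((Hsub SU s ι).inv_mem (inr_mem_Hsub SU s ι hs _))
  have h2 : (inr (η (FreeGroup.of n)) : WrG SU D) ∈ Hsub SU s ι :=
    inr_mem_Hsub SU s ι hs _
  have : xi SU ι t η n = inl (gfun SU ι t n) * inr (η (FreeGroup.of n)) := by
    apply SemidirectProduct.ext <;> simp [xi]
  rw [this]
  exact mul_mem h1 h2

lemma chi_mem_Hsub (ι : D → ℕ) (t : ℕ → D) (η : F →* D)
    (hs : closure (s : Set D) = ⊤) (w : F) : chi SU ι t η w ∈ Hsub SU s ι := by
  have : (chi SU ι t η).range ≤ Hsub SU s ι := by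
    rw [chi, FreeGroup.range_lift_eq_closure, closure_le]
    rintro x ⟨n, rfl⟩
    exact xi_mem_Hsub SU s ι t η hs n
  exact this ⟨w, rfl⟩

end W
lemma generatedBy_closure {G : Type*} [Group G] {k : Set G} (hk : k.Finite) {d : ℕ}
    (hcard : k.ncard ≤ d) : GeneratedBy d ↥(Subgroup.closure k) := by
  have hpre : (Subtype.val ⁻¹' k : Set ↥(Subgroup.closure k)).Finite :=
    hk.preimage (Set.injOn_of_injective Subtype.val_injective)
  refine ⟨hpre.toFinset, ?_, ?_⟩
  · have h1 : (Subtype.val ⁻¹' k : Set ↥(Subgroup.closure k)).ncard ≤ k.ncard :=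
      Set.ncard_le_ncard_of_injOn Subtype.val (fun a ha => ha)
        (Set.injOn_of_injective Subtype.val_injective) hk
    rw [← Set.ncard_eq_toFinset_card _ hpre]
    exact le_trans h1 hcard
  · rw [Set.Finite.coe_toFinset]
    exact Subgroup.closure_closure_coe_preimage

section W2
variable (SU : Set F) (D : Type) [Group D] (s : Finset D)

lemma generatedBy_Hsub (ι : D → ℕ) {m : ℕ} (hcard : s.card ≤ m) :
    GeneratedBy (m + 1) ↥(Hsub SU s ι) := by
  apply generatedBy_closure
  · exact Set.Finite.union ((s.finite_toSet).image _) (Set.finite_singleton _)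
  · calc ((inr '' (s : Set D)) ∪ {inl (fzero SU ι)} : Set (WrG SU D)).ncard
        ≤ (inr '' (s : Set D) : Set (WrG SU D)).ncard + ({inl (fzero SU ι)} : Set (WrG SU D)).ncard :=
          Set.ncard_union_le _ _
    _ ≤ m + 1 := by
        have h2 : (inr '' (s : Set D) : Set (WrG SU D)).ncard ≤ (s : Set D).ncard :=
          Set.ncard_image_le s.finite_toSet
        have h3 : ({inl (fzero SU ι)} : Set (WrG SU D)).ncard = 1 := Set.ncard_singleton _
        rw [h3]
        have h4 := Set.ncard_coe_finset s
        omega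

lemma memProd_Hsub (SV : Set F) (hSatD : Sat SV D) (ι : D → ℕ) :
    MemProd SU SV ↥(Hsub SU s ι) := by
  let K := Hsub SU s ι
  let f : ↥K →* D := rightHom.comp K.subtype
  have hker : ∀ x : ↥K, x ∈ f.ker → ((x : WrG SU D)).right = 1 := by
    intro x hx
    simpa [f, SemidirectProduct.rightHom] using hx
  let ℓ : ↥f.ker →* (D → A SU) :=
    { toFun := fun x => ((x : ↥K) : WrG SU D).left
      map_one' := rfl
      map_mul' := by
        intro x y
        show (((x : ↥K) : WrG SU D) * ((y : ↥K) : WrG SU D)).left = _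
        rw [SemidirectProduct.mul_left, hker x.1 x.2, (shift SU D).map_one]
        rfl }
  have hinj : Function.Injective ℓ := by
    intro x y hxy
    have hr : ((x : ↥K) : WrG SU D).right = ((y : ↥K) : WrG SU D).right := by
      rw [hker x.1 x.2, hker y.1 y.2]
    apply Subtype.ext; apply Subtype.ext
    exact SemidirectProduct.ext hxy hr
  refine ⟨f.ker, f.normal_ker, ?_, ?_⟩
  · exact sat_of_injective ℓ hinj (sat_pi (fun _ => sat_A SU))
  · exact sat_of_injective (QuotientGroup.kerLift f) (QuotientGroup.kerLift_injective f) hSatD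

end W2

lemma countable_of_generatedBy {G : Type*} [Group G] {d : ℕ} (h : GeneratedBy d G) :
    Countable G := by
  obtain ⟨s, -, hs⟩ := h
  have hsur : Function.Surjective (FreeGroup.lift (Subtype.val : {x // x ∈ s} → G)) := by
    rw [← MonoidHom.range_eq_top, FreeGroup.range_lift_eq_closure]
    rw [Subtype.range_coe_subtype]
    exact hs
  have hc : Countable (FreeGroup {x // x ∈ s}) := by
    have : Function.Surjective (FreeGroup.mk : List ({x // x ∈ s} × Bool) → FreeGroup _) :=
      fun x => Quot.exists_rep x
    exact this.countable
  exact hsur.countable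

lemma infinite_of_disc (SV : Set F) (D : Type) [Group D]
    (hVnontriv : ∃ (G : Type) (hG : Group G), haveI := hG; Sat SV G ∧ Nontrivial G)
    (hdisc : ∀ W : Finset (FreeGroup ℕ), (∀ w ∈ W, ¬ IsIdOf SV w) →
      ∃ η : FreeGroup ℕ →* D, ∀ w ∈ W, η w ≠ 1) : Infinite D := by
  rw [← not_finite_iff_infinite]
  intro hfin
  classical
  set n := Nat.card D + 1 with hn
  set W₀ : Finset F := ((Finset.range n ×ˢ Finset.range n).filter (fun p => p.1 ≠ p.2)).image
    (fun p => FreeGroup.of p.1 * (FreeGroup.of p.2)⁻¹) with hW₀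
  have hnid : ∀ w ∈ W₀, ¬ IsIdOf SV w := by
    intro w hw hid
    rw [hW₀] at hw
    simp only [Finset.mem_image, Finset.mem_filter, Finset.mem_product] at hw
    obtain ⟨⟨i, j⟩, ⟨-, hij⟩, rfl⟩ := hw
    obtain ⟨G₀, hG₀, hsat, hnt⟩ := hVnontriv
    letI iG : Group G₀ := hG₀
    obtain ⟨g, h, hg⟩ := hnt.exists_pair_ne
    have := hid G₀ hsat (FreeGroup.lift (fun k => if k = i then g * h⁻¹ else (1 : G₀)))
    simp only [_root_.map_mul, _root_.map_inv, FreeGroup.lift_apply_of] at this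
    rw [if_pos trivial, if_neg (by simpa using Ne.symm hij)] at this
    simp only [inv_one, mul_one] at this
    exact hg (by rw [← mul_inv_eq_one]; exact this)
  obtain ⟨η, hη⟩ := hdisc W₀ hnid
  have hinj : Function.Injective (fun i : Fin n => η (FreeGroup.of (i : ℕ))) := by
    intro i j hijeq
    by_contra hne
    have hmem : FreeGroup.of (i : ℕ) * (FreeGroup.of (j : ℕ))⁻¹ ∈ W₀ := by
      rw [hW₀]
      simp only [Finset.mem_image, Finset.mem_filter, Finset.mem_product]
      exact ⟨((i : ℕ), (j : ℕ)), ⟨⟨Finset.mem_range.2 i.2, Finset.mem_range.2 j.2⟩,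
        by simpa [Fin.val_eq_val] using hne⟩, rfl⟩
    have := hη _ hmem
    apply this
    simp only [_root_.map_mul, _root_.map_inv]
    dsimp only at hijeq
    rw [hijeq]
    simp
  have hcard := Nat.card_le_card_of_injective _ hinj
  simp only [Nat.card_eq_fintype_card, Fintype.card_fin] at hcard
  omega

lemma exists_t (D : Type) [Group D] [Infinite D] (X : Finset D) (M : ℕ) :
    ∃ t : ℕ → D, ∀ n n', n < M → n' < M → n ≠ n' → ∀ x ∈ X, t n ≠ x * t n' := by
  classical
  induction M with
  | zero => exact ⟨fun _ => 1, by omega⟩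
  | succ M ih =>
      obtain ⟨t, ht⟩ := ih
      set bad : Finset D :=
        (Finset.range M).biUnion (fun n' => (X ∪ X.image (·⁻¹)).image (fun x => x * t n')) with hbad
      obtain ⟨z, hz⟩ := Infinite.exists_notMem_finset bad
      refine ⟨Function.update t M z, ?_⟩
      intro n n' hn hn' hne x hx
      rcases Nat.lt_or_ge n M with h1 | h1
      · rcases Nat.lt_or_ge n' M with h2 | h2
        · rw [Function.update_of_ne (by omega), Function.update_of_ne (by omega)]
          exact ht n n' h1 h2 hne x hx
        · -- n' = M
          have hn'M : n' = M := by omega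
          subst hn'M
          rw [Function.update_of_ne (by omega), Function.update_self]
          intro heq
          apply hz
          rw [hbad]
          refine Finset.mem_biUnion.2 ⟨n, Finset.mem_range.2 h1, ?_⟩
          refine Finset.mem_image.2 ⟨x⁻¹, ?_, ?_⟩
          · exact Finset.mem_union_right _ (Finset.mem_image.2 ⟨x, hx, rfl⟩)
          · rw [heq]; group
      · have hnM : n = M := by omega
        subst hnM
        rw [Function.update_self, Function.update_of_ne (by omega)]
        intro heq
        apply hz
        rw [hbad]
        refine Finset.mem_biUnion.2 ⟨n', Finset.mem_range.2 (by omega), ?_⟩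
        exact Finset.mem_image.2 ⟨x, Finset.mem_union_left _ hx, heq.symm⟩


section Core
variable (SU : Set F)

def pre (w : F) (j : ℕ) : F := FreeGroup.mk (w.toWord.take j)

def lett (w : F) (j : ℕ) : ℕ × Bool := w.toWord.getD j (0, true)

def rr (w : F) (j : ℕ) : F := if (lett w j).2 then pre w j else pre w (j + 1)

lemma pre_zero (w : F) : pre w 0 = 1 := rfl

lemma pre_length (w : F) : pre w w.toWord.length = w := by
  rw [pre, List.take_length, FreeGroup.mk_toWord]

lemma pre_succ (w : F) {j : ℕ} (h : j < w.toWord.length) :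
    pre w (j + 1) = pre w j * FreeGroup.mk [lett w j] := by
  rw [pre, pre, List.take_succ, FreeGroup.mul_mk]
  congr 1
  rw [List.getElem?_eq_getElem h]
  rw [lett, List.getD_eq_getElem _ _ h]
  rfl

lemma mk_lett_true (w : F) (j : ℕ) (hb : (lett w j).2 = true) :
    FreeGroup.mk [lett w j] = FreeGroup.of (lett w j).1 := by
  have : lett w j = ((lett w j).1, true) := by rw [← hb]
  rw [this]
  rfl

lemma mk_lett_false (w : F) (j : ℕ) (hb : (lett w j).2 = false) :
    FreeGroup.mk [lett w j] = (FreeGroup.of (lett w j).1)⁻¹ := by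
  have h1 : lett w j = ((lett w j).1, false) := by rw [← hb]
  have h2 : (FreeGroup.of (lett w j).1)⁻¹ = (FreeGroup.mk [((lett w j).1, true)])⁻¹ := rfl
  rw [h1, h2, FreeGroup.inv_mk]
  rfl

variable {D : Type} [Group D] (ι : D → ℕ) (t : ℕ → D) (η : F →* D)
variable {H : Type} [Group H] {N : Subgroup H} [N.Normal]
variable (ψ : F →* H) (sec : H ⧸ N → H)

/-- The core discrimination computation. -/
lemma chi_ne_one (hSatN : Sat SU ↥N)
    (hsec : ∀ p, (QuotientGroup.mk (sec p) : H ⧸ N) = p) (hsec1 : sec 1 = 1)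
    (w : F)
    (C : ∀ j j', j < w.toWord.length → j' < w.toWord.length →
        ι (η (rr w j) * t (lett w j).1) = ι (η (rr w j') * t (lett w j').1) →
        (lett w j).1 = (lett w j').1 ∧
          (QuotientGroup.mk (ψ (rr w j)) : H ⧸ N) = QuotientGroup.mk (ψ (rr w j')))
    (hwN : ψ w ∈ N) (hw1 : ψ w ≠ 1) :
    chi SU ι t η w ≠ 1 := by
  classical
  set L := w.toWord.length with hL
  set val : ℕ → H := fun j =>
    sec (QuotientGroup.mk (ψ (rr w j))) * ψ (FreeGroup.of (lett w j).1) *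
      (sec (QuotientGroup.mk (ψ (rr w j)) * QuotientGroup.mk (ψ (FreeGroup.of (lett w j).1))))⁻¹
    with hval
  have val_mem : ∀ j, val j ∈ N := by
    intro j
    have hmk : (QuotientGroup.mk (val j) : H ⧸ N) = 1 := by
      have : (QuotientGroup.mk (val j) : H ⧸ N) =
          QuotientGroup.mk (sec (QuotientGroup.mk (ψ (rr w j)))) *
          QuotientGroup.mk (ψ (FreeGroup.of (lett w j).1)) *
          (QuotientGroup.mk (sec (QuotientGroup.mk (ψ (rr w j)) *
            QuotientGroup.mk (ψ (FreeGroup.of (lett w j).1)))))⁻¹ := by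
        simp only [hval]
        rfl
      rw [this, hsec, hsec]
      group
    exact (QuotientGroup.eq_one_iff _).1 hmk
  set ν : ℕ → ↥N := fun k =>
    if hex : ∃ j, j < L ∧ ι (η (rr w j) * t (lett w j).1) = k
    then ⟨val hex.choose, val_mem _⟩ else 1 with hν
  obtain ⟨ρ, hρ⟩ := A_lift SU hSatN ν
  have hν_spec : ∀ j, j < L → (ρ (agen SU (ι (η (rr w j) * t (lett w j).1))) : H) = val j := by
    intro j hj
    rw [hρ, hν]
    have hex : ∃ j', j' < L ∧ ι (η (rr w j') * t (lett w j').1) = ι (η (rr w j) * t (lett w j).1) :=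
      ⟨j, hj, rfl⟩
    simp only [dif_pos hex]
    obtain ⟨hj', heq⟩ := hex.choose_spec
    obtain ⟨hn, hv⟩ := C _ _ hj' hj heq
    show val hex.choose = val j
    simp only [hval]
    rw [hn, hv]
  have main : ∀ j, j ≤ L →
      (ρ ((chi SU ι t η (pre w j)).left 1) : H) =
        ψ (pre w j) * (sec (QuotientGroup.mk (ψ (pre w j))))⁻¹ := by
    intro j
    induction j with
    | zero =>
        intro _
        rw [pre_zero, (chi SU ι t η).map_one, SemidirectProduct.one_left]
        have h1 : ((1 : D → A SU) 1) = 1 := rfl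
        rw [h1, ρ.map_one, ψ.map_one]
        have h2 : (QuotientGroup.mk (1 : H) : H ⧸ N) = 1 := by simp
        rw [h2, hsec1]
        simp
    | succ j ih =>
        intro hj1
        have hj : j < L := by omega
        have ihj := ih (by omega)
        rw [pre_succ w hj]
        rcases Bool.eq_false_or_eq_true (lett w j).2 with hb | hb
        · -- hb : true, positive letter
          have hrr' : rr w j = pre w j := by rw [rr, hb, if_pos rfl]
          rw [mk_lett_true w j hb, _root_.map_mul]
          have hxi : chi SU ι t η (FreeGroup.of (lett w j).1) = xi SU ι t η (lett w j).1 := by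
            rw [chi, FreeGroup.lift_apply_of]
          rw [hxi, SemidirectProduct.mul_left]
          have hright : (chi SU ι t η (pre w j)).right = η (pre w j) := chi_right SU ι t η _
          rw [hright]
          have hxil : (xi SU ι t η (lett w j).1).left = gfun SU ι t (lett w j).1 := rfl
          rw [hxil]
          have heval : ((chi SU ι t η (pre w j)).left *
              (shift SU D (η (pre w j))) (gfun SU ι t (lett w j).1)) 1 =
              (chi SU ι t η (pre w j)).left 1 *
              agen SU (ι (η (rr w j) * t (lett w j).1)) := by
            show _ * (gfun SU ι t (lett w j).1 (1 * η (pre w j))) = _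
            congr 1
            rw [one_mul, gfun_apply, hrr']
          rw [heval, ρ.map_mul]
          push_cast [ihj, hν_spec j hj]
          simp only [hval]
          rw [hrr']
          have key : (QuotientGroup.mk (ψ (pre w j)) * QuotientGroup.mk (ψ (FreeGroup.of (lett w j).1)) : H ⧸ N)
              = QuotientGroup.mk (ψ (pre w j * FreeGroup.of (lett w j).1)) := by
            rw [← QuotientGroup.mk_mul, ← _root_.map_mul]
          rw [key, _root_.map_mul ψ]
          group
        · -- hb : false, inverse letter
          have hrr' : rr w j = pre w j * (FreeGroup.of (lett w j).1)⁻¹ := by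
            rw [rr, hb, if_neg (by simp), ← mk_lett_false w j hb, ← pre_succ w hj]
          rw [mk_lett_false w j hb, _root_.map_mul, (chi SU ι t η).map_inv]
          have hxi : chi SU ι t η (FreeGroup.of (lett w j).1) = xi SU ι t η (lett w j).1 := by
            rw [chi, FreeGroup.lift_apply_of]
          rw [hxi, SemidirectProduct.mul_left, SemidirectProduct.inv_left]
          have hright : (chi SU ι t η (pre w j)).right = η (pre w j) := chi_right SU ι t η _
          rw [hright]
          have hxir : (xi SU ι t η (lett w j).1).right = η (FreeGroup.of (lett w j).1) := rfl
          have hxil : (xi SU ι t η (lett w j).1).left = gfun SU ι t (lett w j).1 := rfl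
          rw [hxir, hxil]
          have hcomp : (shift SU D (η (pre w j)))
              ((shift SU D ((η (FreeGroup.of (lett w j).1))⁻¹)) (gfun SU ι t (lett w j).1)⁻¹) =
              (shift SU D (η (rr w j))) ((gfun SU ι t (lett w j).1)⁻¹) := by
            have : η (rr w j) = η (pre w j) * (η (FreeGroup.of (lett w j).1))⁻¹ := by
              rw [hrr', _root_.map_mul]
              congr 1
              exact η.map_inv _
            rw [this, _root_.map_mul (shift SU D)]
            rfl
          rw [hcomp]
          have heval : ((chi SU ι t η (pre w j)).left *
              (shift SU D (η (rr w j))) ((gfun SU ι t (lett w j).1)⁻¹)) 1 =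
              (chi SU ι t η (pre w j)).left 1 *
              (agen SU (ι (η (rr w j) * t (lett w j).1)))⁻¹ := by
            show _ * ((gfun SU ι t (lett w j).1)⁻¹ (1 * η (rr w j))) = _
            congr 1
            have h3 : (gfun SU ι t (lett w j).1)⁻¹ (1 * η (rr w j)) =
                (gfun SU ι t (lett w j).1 (η (rr w j)))⁻¹ := by rw [one_mul]; rfl
            rw [h3, gfun_apply]
          rw [heval, ρ.map_mul, ρ.map_inv]
          push_cast [ihj, hν_spec j hj]
          simp only [hval]
          have key : (QuotientGroup.mk (ψ (rr w j)) * QuotientGroup.mk (ψ (FreeGroup.of (lett w j).1)) : H ⧸ N)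
              = QuotientGroup.mk (ψ (pre w j)) := by
            rw [← QuotientGroup.mk_mul, ← _root_.map_mul]
            congr 1
            rw [hrr']
            group
          rw [key, hrr']
          rw [_root_.map_mul ψ, ψ.map_inv]
          group
  intro hcontra
  have hfin := main L (le_refl L)
  rw [pre_length] at hfin
  have hv1 : (QuotientGroup.mk (ψ w) : H ⧸ N) = 1 := (QuotientGroup.eq_one_iff _).2 hwN
  rw [hv1, hsec1, hcontra, SemidirectProduct.one_left] at hfin
  have h1 : ((1 : D → A SU) 1) = 1 := rfl
  rw [h1, ρ.map_one] at hfin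
  simp only [OneMemClass.coe_one, inv_one, mul_one] at hfin
  exact hw1 hfin.symm

end Core

theorem main_theorem
    (SV : Set (FreeGroup ℕ))
    (hVnontriv : ∃ (G : Type) (hG : Group G), haveI := hG; Sat SV G ∧ Nontrivial G)
    (m : ℕ) (D : Type) [Group D] (hDV : Sat SV D) (hDgen : GeneratedBy m D)
    (hdisc : ∀ W : Finset (FreeGroup ℕ), (∀ w ∈ W, ¬ IsIdOf SV w) →
      ∃ η : FreeGroup ℕ →* D, ∀ w ∈ W, η w ≠ 1)
    (SU : Set (FreeGroup ℕ)) :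
    (∃ (H₀ : Type) (hH : Group H₀), haveI := hH;
      GeneratedBy (m + 1) H₀ ∧ MemProd SU SV H₀ ∧
        ∀ W : Finset (FreeGroup ℕ), (∀ w ∈ W, ¬ IsIdOfProd SU SV w) →
          ∃ η : FreeGroup ℕ →* H₀, ∀ w ∈ W, η w ≠ 1) := by
  classical
  obtain ⟨sD, hsDcard, hsDtop⟩ := hDgen
  haveI hcD : Countable D := countable_of_generatedBy ⟨sD, hsDcard, hsDtop⟩
  haveI hiD : Infinite D := infinite_of_disc SV D hVnontriv hdisc
  obtain ⟨ι, hι⟩ := (countable_iff_exists_injective D).1 hcD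
  refine ⟨↥(Hsub SU sD ι), inferInstance,
    generatedBy_Hsub SU D sD ι hsDcard, memProd_Hsub SU D sD SV hDV ι, ?_⟩
  intro W hW
  -- choose witnessing groups for each word of W
  have hch : ∀ w : {x // x ∈ W}, ∃ (H : Type) (hG : Group H), haveI := hG;
      MemProd SU SV H ∧ ∃ ψ : FreeGroup ℕ →* H, ψ (w : FreeGroup ℕ) ≠ 1 := by
    intro w
    by_contra hc
    apply hW w w.2
    intro H instH hmem φ
    by_contra hφ
    exact hc ⟨H, instH, hmem, φ, hφ⟩
  choose HH instH hrest using hch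
  have hmem := fun w => (hrest w).1
  choose ψw hψw using fun w => (hrest w).2
  choose Nw hNw hUw hVw using hmem
  -- the section of the quotient maps
  let sec : ∀ w : {x // x ∈ W}, (HH w ⧸ Nw w) → HH w := fun w p =>
    if p = 1 then 1 else Quotient.out p
  have hsec : ∀ w p, (QuotientGroup.mk (sec w p) : HH w ⧸ Nw w) = p := by
    intro w p
    by_cases h : p = 1
    · simp only [sec, if_pos h, h]
      exact QuotientGroup.mk_one _
    · simp only [sec, if_neg h]
      exact QuotientGroup.out_eq' p
  have hsec1 : ∀ w, sec w 1 = 1 := by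
    intro w
    simp [sec]
  -- prefixes of each word
  let Prefs : {x // x ∈ W} → Finset (FreeGroup ℕ) := fun w =>
    (Finset.range ((w : FreeGroup ℕ).toWord.length + 1)).image (pre (w : FreeGroup ℕ))
  have hrrPrefs : ∀ (w : {x // x ∈ W}) (j : ℕ), j < (w : FreeGroup ℕ).toWord.length →
      rr (w : FreeGroup ℕ) j ∈ Prefs w := by
    intro w j hj
    rw [rr]
    by_cases hb : (lett (w : FreeGroup ℕ) j).2
    · rw [if_pos hb]
      exact Finset.mem_image.2 ⟨j, Finset.mem_range.2 (by omega), rfl⟩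
    · rw [if_neg hb]
      exact Finset.mem_image.2 ⟨j + 1, Finset.mem_range.2 (by omega), rfl⟩
  -- the finite set of non-V-identities to be discriminated
  let WI : Finset (FreeGroup ℕ) :=
    (W.attach.filter (fun w => ψw w (w : FreeGroup ℕ) ∉ Nw w)).image (fun w => w.1)
  let Wpairs : Finset (FreeGroup ℕ) :=
    W.attach.biUnion (fun w =>
      ((Prefs w ×ˢ Prefs w).filter (fun pr =>
        (QuotientGroup.mk (ψw w pr.1) : HH w ⧸ Nw w) ≠ QuotientGroup.mk (ψw w pr.2))).image
        (fun pr => pr.1 * pr.2⁻¹))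
  have hWnid : ∀ u ∈ WI ∪ Wpairs, ¬ IsIdOf SV u := by
    intro u hu hid
    rcases Finset.mem_union.1 hu with hu | hu
    · simp only [WI, Finset.mem_image, Finset.mem_filter] at hu
      obtain ⟨w, ⟨-, hwI⟩, rfl⟩ := hu
      letI := instH w
      letI := hNw w
      have := hid (HH w ⧸ Nw w) (hVw w) ((QuotientGroup.mk' (Nw w)).comp (ψw w))
      rw [MonoidHom.comp_apply, QuotientGroup.mk'_apply, QuotientGroup.eq_one_iff] at this
      exact hwI this
    · simp only [Wpairs, Finset.mem_biUnion, Finset.mem_image, Finset.mem_filter,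
        Finset.mem_product] at hu
      obtain ⟨w, -, ⟨r, r'⟩, ⟨⟨-, -⟩, hne⟩, rfl⟩ := hu
      letI := instH w
      letI := hNw w
      have := hid (HH w ⧸ Nw w) (hVw w) ((QuotientGroup.mk' (Nw w)).comp (ψw w))
      simp only [_root_.map_mul, _root_.map_inv, MonoidHom.comp_apply,
        QuotientGroup.mk'_apply] at this
      exact hne (by rwa [mul_inv_eq_one] at this)
  obtain ⟨η, hη⟩ := hdisc (WI ∪ Wpairs) hWnid
  -- bound on the letters
  let M : ℕ := (W.biUnion (fun x => (x.toWord.map Prod.fst).toFinset)).sup id + 1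
  have hlM : ∀ (w : {x // x ∈ W}) (j : ℕ), j < (w : FreeGroup ℕ).toWord.length →
      (lett (w : FreeGroup ℕ) j).1 < M := by
    intro w j hj
    have h1 : lett (w : FreeGroup ℕ) j = (w : FreeGroup ℕ).toWord[j] := by
      rw [lett, List.getD_eq_getElem _ _ hj]
    have h2 : (lett (w : FreeGroup ℕ) j).1 ∈
        (W.biUnion (fun x => (x.toWord.map Prod.fst).toFinset)) := by
      refine Finset.mem_biUnion.2 ⟨(w : FreeGroup ℕ), w.2, ?_⟩
      rw [List.mem_toFinset, h1]
      exact List.mem_map.2 ⟨_, List.getElem_mem hj, rfl⟩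
    have h3 := Finset.le_sup (f := id) h2
    simp only [id_eq] at h3
    simp only [M]
    omega
  -- the bad set and the translating elements
  let X : Finset D := W.attach.biUnion (fun w =>
    (Prefs w ×ˢ Prefs w).image (fun pr => (η pr.1)⁻¹ * η pr.2))
  obtain ⟨t, ht⟩ := exists_t D X M
  -- the homomorphism
  refine ⟨MonoidHom.codRestrict (chi SU ι t η) (Hsub SU sD ι)
      (fun x => chi_mem_Hsub SU sD ι t η hsDtop x), ?_⟩
  intro u hu hone
  have hchi1 : chi SU ι t η u = 1 := by
    have := congrArg (Subtype.val) hone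
    exact this
  set w : {x // x ∈ W} := ⟨u, hu⟩ with hwdef
  by_cases hN : ψw w u ∈ Nw w
  · -- main case : use the core computation
    letI := instH w
    letI := hNw w
    refine chi_ne_one SU ι t η (ψw w) (sec w) (hUw w) (hsec w) (hsec1 w) u ?_ hN (hψw w) hchi1
    intro j j' hj hj' heq
    have hd : η (rr u j) * t (lett u j).1 = η (rr u j') * t (lett u j').1 := hι heq
    have hr1 : rr u j ∈ Prefs w := hrrPrefs w j hj
    have hr2 : rr u j' ∈ Prefs w := hrrPrefs w j' hj'
    by_cases hnn : (lett u j).1 = (lett u j').1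
    · refine ⟨hnn, ?_⟩
      rw [hnn] at hd
      have hηeq : η (rr u j) = η (rr u j') := mul_right_cancel hd
      by_contra hvne
      have hpmem : rr u j * (rr u j')⁻¹ ∈ WI ∪ Wpairs := by
        refine Finset.mem_union_right _ (Finset.mem_biUnion.2 ⟨w, Finset.mem_attach _ _, ?_⟩)
        refine Finset.mem_image.2 ⟨(rr u j, rr u j'), ?_, rfl⟩
        exact Finset.mem_filter.2 ⟨Finset.mem_product.2 ⟨hr1, hr2⟩, hvne⟩
      have := hη _ hpmem
      apply this
      rw [_root_.map_mul, η.map_inv, hηeq]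
      group
    · exfalso
      have hx : (η (rr u j))⁻¹ * η (rr u j') ∈ X := by
        refine Finset.mem_biUnion.2 ⟨w, Finset.mem_attach _ _, ?_⟩
        exact Finset.mem_image.2 ⟨(rr u j, rr u j'), Finset.mem_product.2 ⟨hr1, hr2⟩, rfl⟩
      refine ht _ _ (hlM w j hj) (hlM w j' hj') hnn _ hx ?_
      apply mul_left_cancel (a := η (rr u j))
      rw [hd]
      group
      rfl
  · -- the word survives already in D
    have hmemI : u ∈ WI ∪ Wpairs := by
      apply Finset.mem_union_left
      simp only [WI, Finset.mem_image, Finset.mem_filter]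
      exact ⟨w, ⟨Finset.mem_attach _ _, hN⟩, rfl⟩
    have hη1 := hη _ hmemI
    apply hη1
    rw [← chi_right SU ι t η u, hchi1]
    rfl

end PVaux

/-- If a nontrivial variety `V` has its relatively free group discriminated by an
`m`-generated group `D ∈ V`, then for any variety `U` the relatively free group of the
product `U·V` is discriminated by an `(m+1)`-generated group of `U·V`; in particular
the basis rank of `U·V` is at most `m + 1`. -/
theorem product_discriminated_by_m_plus_one_generated
    (SV : Set (FreeGroup ℕ))
    (hVnontriv : ∃ (G : Type) (hG : Group G), haveI := hG; Sat SV G ∧ Nontrivial G)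
    (m : ℕ) (D : Type) [Group D] (hDV : Sat SV D) (hDgen : GeneratedBy m D)
    (hdisc : ∀ W : Finset (FreeGroup ℕ), (∀ w ∈ W, ¬ IsIdOf SV w) →
      ∃ η : FreeGroup ℕ →* D, ∀ w ∈ W, η w ≠ 1)
    (SU : Set (FreeGroup ℕ)) :
    (∃ (H₀ : Type) (hH : Group H₀), haveI := hH;
      GeneratedBy (m + 1) H₀ ∧ MemProd SU SV H₀ ∧
        ∀ W : Finset (FreeGroup ℕ), (∀ w ∈ W, ¬ IsIdOfProd SU SV w) →
          ∃ η : FreeGroup ℕ →* H₀, ∀ w ∈ W, η w ≠ 1) ∧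
    (∀ w : FreeGroup ℕ,
      (∀ (H : Type) [Group H], MemProd SU SV H → GeneratedBy (m + 1) H →
          ∀ φ : FreeGroup ℕ →* H, φ w = 1) →
      ∀ (K : Type) [Group K], MemProd SU SV K → ∀ ψ : FreeGroup ℕ →* K, ψ w = 1) := by
  have part1 := PVaux.main_theorem SV hVnontriv m D hDV hDgen hdisc SU
  refine ⟨part1, ?_⟩
  intro w hw K instK hmemK ψ
  by_contra hψ
  obtain ⟨H₀, hH₀, hgen, hmem, hd⟩ := part1
  letI := hH₀
  have hside : ∀ x ∈ ({w} : Finset (FreeGroup ℕ)), ¬ IsIdOfProd SU SV x := by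
    intro x hx
    rw [Finset.mem_singleton] at hx
    subst hx
    intro hid
    exact hψ (hid K hmemK ψ)
  obtain ⟨η, hη⟩ := hd {w} hside
  exact hη w (Finset.mem_singleton_self w) (hw H₀ hmem hgen η)
end

section
/- For every prime p ≥ 3 and every integer m ≥ 4, there exists a finite group U whose order is a power of p with the following properties: the subgroup U^p of U generated by the set {u^p : u ∈ U} is nontrivial, is contained in the center of U, satisfies z^p = 1 for every z ∈ U^p, and contains an element g ≠ 1 such that no nontrivial element of the cyclic subgroup generated by g can be written as a product a₁^p a₂^p ⋯ a_m^p of m p-th powers of elements a₁, …, a_m of U. -/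
open MvPolynomial

namespace AuxPG

noncomputable section

variable (p n : ℕ) [hpf : Fact p.Prime]

abbrev A := MvPolynomial (Fin n) (ZMod p)

def Iaug : Ideal (A p n) := Ideal.span (Set.range X)

def Jid : Ideal (A p n) := Iaug p n ^ p

abbrev R := A p n ⧸ Jid p n

lemma X_mem_Iaug (k : Fin n) : (X k : A p n) ∈ Iaug p n :=
  Ideal.subset_span ⟨k, rfl⟩

lemma Finsupp_degree_add (a b : Fin n →₀ ℕ) :
    (a + b).degree = a.degree + b.degree := by
  rw [Finsupp.degree_eq_weight_one]
  exact map_add _ _ _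

lemma Finsupp_degree_single (k : Fin n) (e : ℕ) :
    (Finsupp.single k e).degree = e := by
  rw [Finsupp.degree_eq_weight_one, Finsupp.weight_apply]
  simp [Finsupp.sum_single_index]

/-- polynomials all of whose coefficients in degrees `< k` vanish -/
def lowVanish (k : ℕ) : Ideal (A p n) where
  carrier := {f | ∀ α : Fin n →₀ ℕ, α.degree < k → coeff α f = 0}
  add_mem' := by
    intro f g hf hg α hα
    rw [coeff_add, hf α hα, hg α hα, add_zero]
  zero_mem' := by intro α hα; simp
  smul_mem' := by
    classical
    intro c f hf α hα
    rw [smul_eq_mul, coeff_mul]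
    apply Finset.sum_eq_zero
    intro x hx
    have hxa : x.1 + x.2 = α := Finset.HasAntidiagonal.mem_antidiagonal.mp hx
    have : x.2.degree < k := by
      have := Finsupp_degree_add n x.1 x.2
      rw [hxa] at this
      omega
    rw [hf x.2 this, mul_zero]

lemma mul_mem_lowVanish {a b : ℕ} {f g : A p n}
    (hf : f ∈ lowVanish p n a) (hg : g ∈ lowVanish p n b) :
    f * g ∈ lowVanish p n (a + b) := by
  classical
  intro α hα
  rw [coeff_mul]
  apply Finset.sum_eq_zero
  intro x hx
  have hxa : x.1 + x.2 = α := Finset.HasAntidiagonal.mem_antidiagonal.mp hx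
  have hdeg : x.1.degree + x.2.degree < a + b := by
    have := Finsupp_degree_add n x.1 x.2
    rw [hxa] at this; omega
  rcases lt_or_ge x.1.degree a with h1 | h1
  · rw [hf x.1 h1, zero_mul]
  · rw [hg x.2 (by omega), mul_zero]

lemma Iaug_le_lowVanish_one : Iaug p n ≤ lowVanish p n 1 := by
  rw [Iaug, Ideal.span_le]
  rintro _ ⟨k, rfl⟩
  intro α hα
  have : α = 0 := by
    rwa [Nat.lt_one_iff, Finsupp.degree_eq_zero_iff] at hα
  subst this
  classical
  rw [MvPolynomial.X, coeff_monomial]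
  have : ¬ (Finsupp.single k 1 = 0) := by
    simp [Finsupp.single_eq_zero]
  simp [this]

lemma Iaug_pow_le_lowVanish (k : ℕ) : Iaug p n ^ k ≤ lowVanish p n k := by
  induction k with
  | zero => intro f _ α hα; omega
  | succ k ih =>
    rw [pow_succ]
    apply Ideal.mul_le.mpr
    intro f hf g hg
    exact mul_mem_lowVanish p n (ih hf) (Iaug_le_lowVanish_one p n hg)

lemma eq_zero_of_homog {f : A p n} {d k : ℕ} (hdk : d < k)
    (hf : f.IsHomogeneous d) (hl : f ∈ lowVanish p n k) : f = 0 := by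
  apply MvPolynomial.ext
  intro α
  rcases lt_or_ge α.degree k with h | h
  · rw [hl α h, coeff_zero]
  · rw [hf.coeff_eq_zero (by omega), coeff_zero]


lemma mem_Iaug_of_constantCoeff {f : A p n} (h : constantCoeff f = 0) :
    f ∈ Iaug p n := by
  classical
  rw [as_sum f]
  apply Ideal.sum_mem
  intro α hα
  have hα0 : α ≠ 0 := by
    rintro rfl
    rw [mem_support_iff] at hα
    exact hα h
  obtain ⟨k, hk⟩ : ∃ k, α k ≠ 0 := by
    by_contra hc
    push_neg at hc
    exact hα0 (Finsupp.ext fun k => hc k)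
  have hsplit : α = Finsupp.single k 1 + (α - Finsupp.single k 1) := by
    ext j
    rw [Finsupp.add_apply, Finsupp.tsub_apply]
    by_cases hj : j = k
    · subst hj; simp only [Finsupp.single_eq_same]; omega
    · simp [Finsupp.single_eq_of_ne' (Ne.symm hj)]
  rw [hsplit, monomial_single_add, pow_one]
  exact Ideal.mul_mem_right _ _ (X_mem_Iaug p n k)

instance : Fact (1 < p) := ⟨hpf.out.one_lt⟩

lemma one_not_mem_Jid : (1 : A p n) ∉ Jid p n := by
  intro h
  have := Iaug_pow_le_lowVanish p n p h 0 (by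
    rw [map_zero]; exact hpf.out.pos)
  rw [coeff_zero_one] at this
  exact one_ne_zero this

instance : Nontrivial (R p n) :=
  Ideal.Quotient.nontrivial_iff.mpr (fun h => one_not_mem_Jid p n (h ▸ Submodule.mem_top))

instance : CharP (R p n) p := by
  have : Function.Injective (algebraMap (ZMod p) (R p n)) :=
    RingHom.injective _
  exact charP_of_injective_algebraMap this p

def pr : A p n →+* R p n := Ideal.Quotient.mk (Jid p n)

lemma pr_smul (c : ZMod p) (f : A p n) : pr p n (c • f) = c • pr p n f := by
  have h2 : pr p n = ⇑(Ideal.Quotient.mkₐ (ZMod p) (Jid p n)) := by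
    rw [Ideal.Quotient.mkₐ_eq_mk]; rfl
  rw [h2]
  exact map_smul (Ideal.Quotient.mkₐ (ZMod p) (Jid p n)) c f

def xv (k : Fin n) : R p n := pr p n (X k)

lemma xv_pow_p (k : Fin n) : xv p n k ^ p = 0 := by
  rw [xv, ← map_pow]
  exact Ideal.Quotient.eq_zero_iff_mem.mpr (Ideal.pow_mem_pow (X_mem_Iaug p n k) p)

lemma one_add_xv_pow_p (k : Fin n) : (1 + xv p n k) ^ p = 1 := by
  rw [add_pow_char, one_pow, xv_pow_p, add_zero]

def vu (k : Fin n) : (R p n)ˣ :=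
  Units.mkOfMulEqOne (1 + xv p n k) ((1 + xv p n k) ^ (p - 1))
    (by rw [← pow_succ']
        have h1 : p - 1 + 1 = p := Nat.succ_pred_eq_of_pos hpf.out.pos
        rw [h1, one_add_xv_pow_p])

lemma vu_val (k : Fin n) : ((vu p n k : (R p n)ˣ) : R p n) = 1 + xv p n k := rfl

lemma vu_pow_p (k : Fin n) : (vu p n k) ^ p = 1 := by
  ext
  rw [Units.val_pow_eq_pow_val, vu_val, one_add_xv_pow_p, Units.val_one]

def wu (e : Fin n → ZMod p) : (R p n)ˣ := ∏ k, vu p n k ^ (e k).val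

lemma wu_zero : wu p n 0 = 1 := by
  rw [wu]
  apply Finset.prod_eq_one
  intro k _
  simp [ZMod.val_zero]

lemma wu_add (e e' : Fin n → ZMod p) :
    wu p n (e + e') = wu p n e * wu p n e' := by
  rw [wu, wu, wu, ← Finset.prod_mul_distrib]
  apply Finset.prod_congr rfl
  intro k _
  rw [← pow_add, Pi.add_apply, ZMod.val_add]
  exact (pow_eq_pow_mod _ (vu_pow_p p n k)).symm

def Wf (e : Fin n → ZMod p) : R p n := ((wu p n e : (R p n)ˣ) : R p n)

lemma Wf_zero : Wf p n 0 = 1 := by rw [Wf, wu_zero, Units.val_one]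

lemma Wf_add (e e' : Fin n → ZMod p) :
    Wf p n (e + e') = Wf p n e * Wf p n e' := by
  rw [Wf, Wf, Wf, wu_add, Units.val_mul]

lemma Wf_pow_p (e : Fin n → ZMod p) : Wf p n e ^ p = 1 := by
  rw [Wf, ← Units.val_pow_eq_pow_val, wu, ← Finset.prod_pow]
  have : ∀ k ∈ Finset.univ, (vu p n k ^ (e k).val) ^ p = 1 := by
    intro k _
    rw [← pow_mul, mul_comm, pow_mul, vu_pow_p, one_pow]
  rw [Finset.prod_congr rfl this, Finset.prod_const_one, Units.val_one]


/-- The auxiliary group: underlying set `R × (Fin n → ZMod p)`. -/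
@[ext] structure GU where
  b : R p n
  t : Fin n → ZMod p

instance : Group (GU p n) where
  mul u v := ⟨u.b + Wf p n u.t * v.b, u.t + v.t⟩
  one := ⟨0, 0⟩
  inv u := ⟨-(Wf p n (-u.t) * u.b), -u.t⟩
  mul_assoc u v w := by
    apply GU.ext
    · show (u.b + Wf p n u.t * v.b) + Wf p n (u.t + v.t) * w.b
        = u.b + Wf p n u.t * (v.b + Wf p n v.t * w.b)
      rw [Wf_add]; ring
    · show (u.t + v.t) + w.t = u.t + (v.t + w.t)
      rw [add_assoc]
  one_mul u := by
    apply GU.ext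
    · show (0 : R p n) + Wf p n 0 * u.b = u.b
      rw [Wf_zero]; ring
    · show (0 : Fin n → ZMod p) + u.t = u.t
      rw [zero_add]
  mul_one u := by
    apply GU.ext
    · show u.b + Wf p n u.t * 0 = u.b
      ring
    · show u.t + 0 = u.t
      rw [add_zero]
  inv_mul_cancel u := by
    apply GU.ext
    · show -(Wf p n (-u.t) * u.b) + Wf p n (-u.t) * u.b = (0 : R p n)
      ring
    · show -u.t + u.t = 0
      rw [neg_add_cancel]

lemma GU_mul_def (u v : GU p n) :
    u * v = ⟨u.b + Wf p n u.t * v.b, u.t + v.t⟩ := rfl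

lemma GU_one_def : (1 : GU p n) = ⟨0, 0⟩ := rfl

lemma GU_inv_def (u : GU p n) : u⁻¹ = ⟨-(Wf p n (-u.t) * u.b), -u.t⟩ := rfl

lemma Wf_nsmul (e : Fin n → ZMod p) (j : ℕ) :
    Wf p n (j • e) = Wf p n e ^ j := by
  induction j with
  | zero => rw [zero_smul, pow_zero, Wf_zero]
  | succ j ih => rw [succ_nsmul, Wf_add, ih, pow_succ]

lemma GU_pow_def (u : GU p n) (j : ℕ) :
    u ^ j = ⟨(∑ i ∈ Finset.range j, Wf p n u.t ^ i) * u.b, j • u.t⟩ := by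
  induction j with
  | zero =>
    rw [pow_zero, GU_one_def]
    apply GU.ext
    · show (0 : R p n) = (∑ i ∈ Finset.range 0, Wf p n u.t ^ i) * u.b
      simp
    · show (0 : Fin n → ZMod p) = 0 • u.t
      rw [zero_smul]
  | succ j ih =>
    rw [pow_succ, ih, GU_mul_def]
    apply GU.ext
    · show (∑ i ∈ Finset.range j, Wf p n u.t ^ i) * u.b + Wf p n (j • u.t) * u.b
        = (∑ i ∈ Finset.range (j+1), Wf p n u.t ^ i) * u.b
      rw [Finset.sum_range_succ, Wf_nsmul]; ring
    · show j • u.t + u.t = (j + 1) • u.t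
      rw [succ_nsmul]

lemma geom_eq_pow {y : R p n} (hy : y ^ p = 1) :
    (∑ i ∈ Finset.range p, y ^ i) = (y - 1) ^ (p - 1) := by
  have hpoly : (∑ i ∈ Finset.range p, (Polynomial.X : Polynomial (ZMod p)) ^ i)
      = (Polynomial.X - 1) ^ (p - 1) := by
    have h1 : ((Polynomial.X : Polynomial (ZMod p)) - 1) ^ (p - 1) * (Polynomial.X - 1)
        = (∑ i ∈ Finset.range p, (Polynomial.X : Polynomial (ZMod p)) ^ i) * (Polynomial.X - 1) := by
      have hp1 : p - 1 + 1 = p := by have := hpf.out.pos; omega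
      rw [← pow_succ, hp1, geom_sum_mul]
      haveI : CharP (Polynomial (ZMod p)) p := by
        have : Function.Injective (algebraMap (ZMod p) (Polynomial (ZMod p))) :=
          Polynomial.C_injective
        exact charP_of_injective_algebraMap this p
      rw [sub_pow_char (x := (Polynomial.X : Polynomial (ZMod p))) (y := 1), one_pow]
    have h2 : ((Polynomial.X : Polynomial (ZMod p)) - 1) ≠ 0 := by
      have := Polynomial.X_sub_C_ne_zero (R := ZMod p) 1
      rwa [Polynomial.C_1] at this
    exact (mul_right_cancel₀ h2 h1).symm
  have := congrArg (Polynomial.aeval y) hpoly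
  simpa using this

lemma GU_pow_p (u : GU p n) :
    u ^ p = ⟨(Wf p n u.t - 1) ^ (p - 1) * u.b, 0⟩ := by
  rw [GU_pow_def, geom_eq_pow p n (Wf_pow_p p n u.t)]
  congr 1
  ext k
  show p • u.t k = 0
  rw [nsmul_eq_mul, ZMod.natCast_self, zero_mul]


lemma pow_one_add_sub (a : ℕ) (y : A p n) :
    (1 + y) ^ a - 1 - (a : A p n) * y ∈ Ideal.span {y ^ 2} := by
  induction a with
  | zero =>
    have h : (1 + y) ^ 0 - 1 - ((0 : ℕ) : A p n) * y = 0 := by push_cast; ring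
    rw [h]; exact Ideal.zero_mem _
  | succ a ih =>
    have h : (1 + y) ^ (a + 1) - 1 - ((a + 1 : ℕ) : A p n) * y
        = (1 + y) * ((1 + y) ^ a - 1 - (a : A p n) * y) + (a : A p n) * y ^ 2 := by
      push_cast; ring
    rw [h]
    exact Ideal.add_mem _ (Ideal.mul_mem_left _ _ ih)
      (Ideal.mul_mem_left _ _ (Ideal.subset_span rfl))

lemma span_sq_le_Iaug_sq (k : Fin n) :
    Ideal.span {(X k : A p n) ^ 2} ≤ Iaug p n ^ 2 := by
  rw [Ideal.span_le, Set.singleton_subset_iff]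
  exact Ideal.pow_mem_pow (X_mem_Iaug p n k) 2

lemma prod_one_add_sub (s : Finset (Fin n)) (z : Fin n → A p n)
    (hz : ∀ k, z k ∈ Iaug p n) :
    (∏ k ∈ s, (1 + z k)) - 1 - (∑ k ∈ s, z k) ∈ Iaug p n ^ 2 := by
  classical
  induction s using Finset.induction_on with
  | empty =>
    have h : (∏ k ∈ (∅ : Finset (Fin n)), (1 + z k)) - 1
        - (∑ k ∈ (∅ : Finset (Fin n)), z k) = 0 := by simp
    rw [h]; exact Ideal.zero_mem _
  | insert _ _ ha ih =>
    rename_i a s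
    rw [Finset.prod_insert ha, Finset.sum_insert ha]
    have h : (1 + z a) * (∏ k ∈ s, (1 + z k)) - 1 - (z a + ∑ k ∈ s, z k)
        = (1 + z a) * ((∏ k ∈ s, (1 + z k)) - 1 - (∑ k ∈ s, z k))
          + z a * (∑ k ∈ s, z k) := by ring
    rw [h]
    apply Ideal.add_mem _ (Ideal.mul_mem_left _ _ ih)
    have h2 : Iaug p n * Iaug p n = Iaug p n ^ 2 := (sq _).symm
    rw [← h2]
    exact Ideal.mul_mem_mul (hz a) (Ideal.sum_mem _ (fun k _ => hz k))

/-- the linear form attached to `e` -/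
def Lf (e : Fin n → ZMod p) : A p n := ∑ k, C (e k) * X k

lemma Lf_mem (e : Fin n → ZMod p) : Lf p n e ∈ Iaug p n :=
  Ideal.sum_mem _ (fun k _ => Ideal.mul_mem_left _ _ (X_mem_Iaug p n k))

/-- the canonical lift of `Wf` -/
def Wt (e : Fin n → ZMod p) : A p n := ∏ k, (1 + X k) ^ ((e k).val)

lemma pr_Wt (e : Fin n → ZMod p) : pr p n (Wt p n e) = Wf p n e := by
  rw [Wt, map_prod, Wf, wu, ← Units.coeHom_apply, map_prod]
  apply Finset.prod_congr rfl
  intro k _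
  rw [map_pow, map_add, map_one, Units.coeHom_apply, Units.val_pow_eq_pow_val, vu_val]
  rfl

lemma natCast_val_eq_C (c : ZMod p) :
    (((c.val : ℕ)) : A p n) = C c := by
  rw [← map_natCast (C : ZMod p →+* A p n) c.val, ZMod.natCast_val, ZMod.cast_id]

lemma Wt_sub_mem (e : Fin n → ZMod p) :
    Wt p n e - 1 - Lf p n e ∈ Iaug p n ^ 2 := by
  set z : Fin n → A p n := fun k => (1 + X k) ^ ((e k).val) - 1 with hz_def
  have hz1 : ∀ k, z k - ((e k).val : A p n) * X k ∈ Iaug p n ^ 2 := by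
    intro k
    have h := pow_one_add_sub p n ((e k).val) (X k)
    have heq : z k - ((e k).val : A p n) * X k
        = (1 + X k) ^ ((e k).val) - 1 - ((e k).val : A p n) * X k := by
      simp only [hz_def]
    rw [heq]
    exact span_sq_le_Iaug_sq p n k h
  have hz : ∀ k, z k ∈ Iaug p n := by
    intro k
    have h1 := hz1 k
    have h2 : z k = (z k - ((e k).val : A p n) * X k) + ((e k).val : A p n) * X k := by ring
    rw [h2]
    exact Ideal.add_mem _ (Ideal.pow_le_self (by norm_num) h1)
      (Ideal.mul_mem_left _ _ (X_mem_Iaug p n k))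
  have hprod := prod_one_add_sub p n Finset.univ z hz
  have hWt : Wt p n e = ∏ k, (1 + z k) := by
    rw [Wt]
    apply Finset.prod_congr rfl
    intro k _
    simp only [hz_def]
    ring
  have hsum : (∑ k, z k) - Lf p n e ∈ Iaug p n ^ 2 := by
    rw [Lf, ← Finset.sum_sub_distrib]
    apply Ideal.sum_mem
    intro k _
    have : z k - C (e k) * X k = z k - ((e k).val : A p n) * X k := by
      rw [natCast_val_eq_C]
    rw [this]
    exact hz1 k
  have hfinal : Wt p n e - 1 - Lf p n e
      = ((∏ k, (1 + z k)) - 1 - (∑ k, z k)) + ((∑ k, z k) - Lf p n e) := by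
    rw [hWt]; ring
  rw [hfinal]
  exact Ideal.add_mem _ hprod hsum

lemma Wt_sub_one_mem (e : Fin n → ZMod p) : Wt p n e - 1 ∈ Iaug p n := by
  have h : Wt p n e - 1 = (Wt p n e - 1 - Lf p n e) + Lf p n e := by ring
  rw [h]
  exact Ideal.add_mem _ (Ideal.pow_le_self (by norm_num) (Wt_sub_mem p n e)) (Lf_mem p n e)

lemma key_pow_mem (e : Fin n → ZMod p) (f : A p n) :
    (Wt p n e - 1) ^ (p - 1) * f - C (constantCoeff f) * (Lf p n e) ^ (p - 1)
      ∈ Jid p n := by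
  have hd : 2 ≤ p := hpf.out.two_le
  set d := p - 1 with hd_def
  set L := Lf p n e with hL_def
  set Q := Wt p n e - 1 - L with hQ_def
  have hQ : Q ∈ Iaug p n ^ 2 := Wt_sub_mem p n e
  have hL : L ∈ Iaug p n := Lf_mem p n e
  have hW1 : Wt p n e - 1 = L + Q := by rw [hQ_def]; ring
  -- (L + Q)^d - L^d ∈ Iaug^(d+1) = Jid
  have hdp : d + 1 = p := by omega
  have hstep : (L + Q) ^ d - L ^ d ∈ Iaug p n ^ p := by
    rw [add_pow]
    rw [Finset.sum_range_succ]
    have hlast : L ^ d * Q ^ (d - d) * (Nat.choose d d : A p n) = L ^ d := by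
      simp [Nat.sub_self]
    rw [hlast]
    have h2 : (∑ k ∈ Finset.range d, L ^ k * Q ^ (d - k) * (Nat.choose d k : A p n))
        + L ^ d - L ^ d
        = ∑ k ∈ Finset.range d, L ^ k * Q ^ (d - k) * (Nat.choose d k : A p n) := by ring
    rw [h2]
    apply Ideal.sum_mem
    intro k hk
    rw [Finset.mem_range] at hk
    apply Ideal.mul_mem_right
    have hmem : L ^ k * Q ^ (d - k) ∈ Iaug p n ^ (k + 2 * (d - k)) := by
      have h3 : Q ^ (d - k) ∈ (Iaug p n ^ 2) ^ (d - k) := Ideal.pow_mem_pow hQ _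
      rw [← pow_mul] at h3
      have h4 : L ^ k ∈ Iaug p n ^ k := Ideal.pow_mem_pow hL _
      have := Ideal.mul_mem_mul h4 h3
      rwa [← pow_add] at this
    have hle : Iaug p n ^ (k + 2 * (d - k)) ≤ Iaug p n ^ p := by
      apply Ideal.pow_le_pow_right
      omega
    exact hle hmem
  -- full expression
  have hsplit : (Wt p n e - 1) ^ d * f - C (constantCoeff f) * L ^ d
      = ((L + Q) ^ d - L ^ d) * f + L ^ d * (f - C (constantCoeff f)) := by
    rw [hW1]; ring
  rw [Jid, hsplit]
  apply Ideal.add_mem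
  · exact Ideal.mul_mem_right _ _ hstep
  · have h5 : f - C (constantCoeff f) ∈ Iaug p n := by
      apply mem_Iaug_of_constantCoeff
      rw [map_sub, constantCoeff_C, sub_self]
    have h6 := Ideal.mul_mem_mul (Ideal.pow_mem_pow hL d) h5
    rw [← pow_succ] at h6
    rwa [hdp] at h6


/-- embedding of the base group -/
def emb (r : R p n) : GU p n := ⟨r, 0⟩

lemma emb_mul (r r' : R p n) : emb p n r * emb p n r' = emb p n (r + r') := by
  rw [GU_mul_def]
  show (⟨r + Wf p n 0 * r', 0 + 0⟩ : GU p n) = ⟨r + r', 0⟩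
  rw [Wf_zero, one_mul, add_zero]

lemma emb_one : emb p n 0 = 1 := rfl

lemma emb_inj {r r' : R p n} (h : emb p n r = emb p n r') : r = r' := by
  have := congrArg GU.b h
  exact this

lemma emb_zpow (r : R p n) (j : ℤ) : emb p n r ^ j = emb p n (j • r) := by
  have hnat : ∀ jn : ℕ, emb p n r ^ jn = emb p n (jn • r) := by
    intro jn
    rw [GU_pow_def]
    show (⟨(∑ i ∈ Finset.range jn, Wf p n (0 : Fin n → ZMod p) ^ i) * r,
        jn • (0 : Fin n → ZMod p)⟩ : GU p n) = ⟨jn • r, 0⟩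
    rw [Wf_zero, smul_zero]
    congr 1
    simp [nsmul_eq_mul]
  rcases j with jn | jn
  · rw [Int.ofNat_eq_coe, zpow_natCast, hnat, natCast_zsmul]
  · rw [zpow_negSucc, hnat]
    rw [GU_inv_def]
    show (⟨-(Wf p n (-0) * ((jn + 1) • r)), -0⟩ : GU p n) = ⟨Int.negSucc jn • r, 0⟩
    rw [neg_zero, Wf_zero, one_mul]
    congr 1
    rw [negSucc_zsmul]

/-- normal form of `p`-th powers -/
lemma pow_p_normal (u : GU p n) :
    ∃ c : ZMod p, u ^ p = emb p n (pr p n (C c * (Lf p n u.t) ^ (p - 1))) := by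
  obtain ⟨f, hf⟩ := Ideal.Quotient.mk_surjective u.b
  refine ⟨constantCoeff f, ?_⟩
  rw [GU_pow_p]
  show (⟨(Wf p n u.t - 1) ^ (p - 1) * u.b, 0⟩ : GU p n) = _
  rw [emb]
  congr 1
  have hkey := key_pow_mem p n u.t f
  have hfb : pr p n f = u.b := hf
  have h3 : pr p n ((Wt p n u.t - 1) ^ (p - 1) * f)
      = pr p n (C (constantCoeff f) * (Lf p n u.t) ^ (p - 1)) := by
    exact Ideal.Quotient.eq.mpr hkey
  rw [← h3, map_mul, map_pow, map_sub, map_one, pr_Wt, hfb]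

/-- the subgroup of central elements containing all p-th powers -/
def Z0 : Subgroup (GU p n) where
  carrier := {u | u.t = 0 ∧ ∀ e, (Wf p n e - 1) * u.b = 0}
  one_mem' := by
    constructor
    · rfl
    · intro e; show (Wf p n e - 1) * (0 : R p n) = 0; rw [mul_zero]
  mul_mem' := by
    rintro u v ⟨hu1, hu2⟩ ⟨hv1, hv2⟩
    constructor
    · show u.t + v.t = 0
      rw [hu1, hv1, add_zero]
    · intro e
      show (Wf p n e - 1) * (u.b + Wf p n u.t * v.b) = 0
      rw [hu1, Wf_zero, one_mul, mul_add, hu2 e, hv2 e, add_zero]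
  inv_mem' := by
    rintro u ⟨hu1, hu2⟩
    constructor
    · show -u.t = 0
      rw [hu1, neg_zero]
    · intro e
      show (Wf p n e - 1) * (-(Wf p n (-u.t) * u.b)) = 0
      rw [hu1, neg_zero, Wf_zero, one_mul]
      have h := hu2 e
      linear_combination -h

lemma pow_p_mem_Z0 (u : GU p n) : u ^ p ∈ Z0 p n := by
  obtain ⟨c, hc⟩ := pow_p_normal p n u
  rw [hc]
  constructor
  · rfl
  · intro e
    show (Wf p n e - 1) * pr p n (C c * (Lf p n u.t) ^ (p - 1)) = 0
    have h1 : Wf p n e - 1 = pr p n (Wt p n e - 1) := by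
      rw [map_sub, map_one, pr_Wt]
    rw [h1, ← map_mul]
    apply Ideal.Quotient.eq_zero_iff_mem.mpr
    have hmem : (Wt p n e - 1) * (Lf p n u.t) ^ (p - 1) ∈ Iaug p n ^ p := by
      have := Ideal.mul_mem_mul (Wt_sub_one_mem p n e)
        (Ideal.pow_mem_pow (Lf_mem p n u.t) (p - 1))
      rw [← pow_succ'] at this
      have hp1 : p - 1 + 1 = p := Nat.succ_pred_eq_of_pos hpf.out.pos
      rwa [hp1] at this
    have heq : (Wt p n e - 1) * (C c * (Lf p n u.t) ^ (p - 1))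
        = C c * ((Wt p n e - 1) * (Lf p n u.t) ^ (p - 1)) := by ring
    rw [heq]
    exact Ideal.mul_mem_left _ _ hmem

lemma Z0_central (z : GU p n) (hz : z ∈ Z0 p n) : z ∈ Subgroup.center (GU p n) := by
  rw [Subgroup.mem_center_iff]
  intro u
  obtain ⟨h1, h2⟩ := hz
  rw [GU_mul_def, GU_mul_def]
  apply GU.ext
  · show u.b + Wf p n u.t * z.b = z.b + Wf p n z.t * u.b
    rw [h1, Wf_zero, one_mul]
    have : Wf p n u.t * z.b = (Wf p n u.t - 1) * z.b + z.b := by ring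
    rw [this, h2 u.t, zero_add, add_comm]
  · show u.t + z.t = z.t + u.t
    rw [h1, add_zero, zero_add]

lemma Z0_pow_p (z : GU p n) (hz : z ∈ Z0 p n) : z ^ p = 1 := by
  obtain ⟨h1, _⟩ := hz
  rw [GU_pow_p, GU_one_def]
  congr 1
  rw [h1, Wf_zero, sub_self]
  have h2 : 2 ≤ p := hpf.out.two_le
  rw [zero_pow (by omega), zero_mul]


/-- the degree-(p-1) form Σ Xₜ^(p-1) -/
def Gt : A p n := ∑ t, X t ^ (p - 1)

lemma CGt_not_mem {c : ZMod p} (hc : c ≠ 0) (k0 : Fin n) :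
    C c * Gt p n ∉ Jid p n := by
  intro hmem
  have hd0 : p - 1 ≠ 0 := by have := hpf.out.two_le; omega
  have hlow : C c * Gt p n ∈ lowVanish p n p := Iaug_pow_le_lowVanish p n p hmem
  have hdeg : (Finsupp.single k0 (p - 1)).degree < p := by
    rw [Finsupp_degree_single]
    have := hpf.out.pos; omega
  have := hlow (Finsupp.single k0 (p - 1)) hdeg
  rw [coeff_C_mul, Gt] at this
  classical
  have hco : coeff (Finsupp.single k0 (p - 1)) (∑ t, (X t : A p n) ^ (p - 1))
      = 1 := by
    rw [coeff_sum]
    rw [Finset.sum_eq_single k0]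
    · rw [X_pow_eq_monomial, coeff_monomial, if_pos rfl]
    · intro t _ ht
      rw [X_pow_eq_monomial, coeff_monomial, if_neg]
      intro hsing
      exact ht (Finsupp.single_left_injective hd0 hsing)
    · intro h; exact absurd (Finset.mem_univ k0) h
  rw [hco, mul_one] at this
  exact hc this

lemma list_map_emb_prod (l : List (R p n)) :
    (l.map (emb p n)).prod = emb p n l.sum := by
  induction l with
  | nil => rw [List.map_nil, List.prod_nil, List.sum_nil, emb_one]
  | cons a l ih =>
    rw [List.map_cons, List.prod_cons, List.sum_cons, ih, emb_mul]

/-- The crucial polynomial lemma: `c·Σ Xₜ^(p-1)` is not a sum of `m` scaled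
`(p-1)`-st powers of linear forms if there are `m+1` variables. -/
lemma main_poly_lemma (hp3 : 3 ≤ p) (m : ℕ) (hn : n = m + 1)
    {c : ZMod p} (hc : c ≠ 0) (cs : Fin m → ZMod p)
    (es : Fin m → (Fin n → ZMod p))
    (heq : C c * Gt p n - (∑ i, C (cs i) * (Lf p n (es i)) ^ (p - 1)) ∈ Jid p n) :
    False := by
  classical
  set d := p - 1 with hd_def
  have hd2 : 2 ≤ d := by have := hp3; omega
  have hdp : d < p := by have := hpf.out.pos; omega
  -- homogeneity
  have hGt : (Gt p n).IsHomogeneous d := by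
    apply MvPolynomial.IsHomogeneous.sum
    intro t _
    have := (isHomogeneous_X (ZMod p) t).pow d
    rwa [one_mul] at this
  have hLf : ∀ i, (Lf p n (es i)).IsHomogeneous 1 := by
    intro i
    apply MvPolynomial.IsHomogeneous.sum
    intro k _
    exact (isHomogeneous_X (ZMod p) k).C_mul _
  have hP : (C c * Gt p n - (∑ i, C (cs i) * (Lf p n (es i)) ^ (p - 1))).IsHomogeneous d := by
    apply MvPolynomial.IsHomogeneous.sub
    · exact (hGt).C_mul c
    · apply MvPolynomial.IsHomogeneous.sum
      intro i _
      have := ((hLf i).pow d).C_mul (cs i)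
      rwa [one_mul] at this
  have hP0 : C c * Gt p n - (∑ i, C (cs i) * (Lf p n (es i)) ^ (p - 1)) = 0 :=
    eq_zero_of_homog p n hdp hP (Iaug_pow_le_lowVanish p n p heq)
  have hpoly : C c * Gt p n = ∑ i, C (cs i) * (Lf p n (es i)) ^ (p - 1) :=
    sub_eq_zero.mp hP0
  -- apply partial derivatives
  set D : ZMod p := (d : ZMod p) with hD_def
  have hD : D ≠ 0 := by
    rw [hD_def, hd_def]
    have h1 : ((p - 1 : ℕ) : ZMod p) = (p : ZMod p) - 1 := by
      have h2 : (1 : ℕ) ≤ p := hpf.out.pos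
      push_cast [Nat.cast_sub h2]
      ring
    rw [h1, ZMod.natCast_self, zero_sub, neg_ne_zero]
    exact one_ne_zero
  set V := Submodule.span (ZMod p)
      (Set.range fun i : Fin m => (Lf p n (es i)) ^ (d - 1)) with hV_def
  have hmemV : ∀ k : Fin n, (X k : A p n) ^ (d - 1) ∈ V := by
    intro k
    have hder := congrArg (pderiv k) hpoly
    rw [pderiv_C_mul, map_sum] at hder
    -- LHS
    have hL : pderiv k (Gt p n) = C D * (X k : A p n) ^ (d - 1) := by
      rw [Gt, map_sum]
      rw [Finset.sum_eq_single k]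
      · rw [pderiv_pow, pderiv_X_self, mul_one, hD_def, map_natCast]
      · intro t _ ht
        rw [pderiv_pow, pderiv_X_of_ne ht, mul_zero]
      · intro h; exact absurd (Finset.mem_univ k) h
    -- RHS terms
    have hR : ∀ i, pderiv k (C (cs i) * (Lf p n (es i)) ^ (p - 1))
        = C (cs i * D * es i k) * (Lf p n (es i)) ^ (d - 1) := by
      intro i
      rw [pderiv_C_mul, pderiv_pow]
      have hDL : pderiv k (Lf p n (es i)) = C (es i k) := by
        rw [Lf, map_sum]
        rw [Finset.sum_eq_single k]
        · rw [pderiv_C_mul, pderiv_X_self, mul_one]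
        · intro t _ ht
          rw [pderiv_C_mul, pderiv_X_of_ne ht, mul_zero]
        · intro h; exact absurd (Finset.mem_univ k) h
      rw [hDL, hD_def, map_mul, map_mul, map_natCast]
      ring
    rw [hL] at hder
    have hsum : (∑ i, pderiv k (C (cs i) * (Lf p n (es i)) ^ (p - 1)))
        = ∑ i, C (cs i * D * es i k) * (Lf p n (es i)) ^ (d - 1) :=
      Finset.sum_congr rfl (fun i _ => hR i)
    rw [hsum] at hder
    -- membership
    have hmem1 : C c * (C D * (X k : A p n) ^ (d - 1)) ∈ V := by
      rw [hder]
      apply Submodule.sum_mem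
      intro i _
      rw [← smul_eq_C_mul]
      exact Submodule.smul_mem _ _ (Submodule.subset_span ⟨i, rfl⟩)
    have heq2 : C c * (C D * (X k : A p n) ^ (d - 1))
        = (c * D) • ((X k : A p n) ^ (d - 1)) := by
      rw [smul_eq_C_mul, map_mul]; ring
    rw [heq2] at hmem1
    have := Submodule.smul_mem V (c * D)⁻¹ hmem1
    rwa [smul_smul, inv_mul_cancel₀ (mul_ne_zero hc hD), one_smul] at this
  -- linear independence of the X k ^ (d-1)
  have hd1 : d - 1 ≠ 0 := by omega
  have li : LinearIndependent (ZMod p) (fun k : Fin n => (X k : A p n) ^ (d - 1)) := by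
    have lb := (basisMonomials (Fin n) (ZMod p)).linearIndependent
    have lc := lb.comp (fun k : Fin n => Finsupp.single k (d - 1))
      (Finsupp.single_left_injective hd1)
    have hfe : ((basisMonomials (Fin n) (ZMod p)) ∘
        fun k : Fin n => Finsupp.single k (d - 1))
        = fun k : Fin n => (X k : A p n) ^ (d - 1) := by
      funext k
      rw [Function.comp_apply, coe_basisMonomials, X_pow_eq_monomial]
    rwa [hfe] at lc
  -- contradiction via dimension
  haveI : FiniteDimensional (ZMod p) V :=
    FiniteDimensional.span_of_finite _ (Set.finite_range _)
  have livf : LinearIndependent (ZMod p)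
      (fun k : Fin n => (⟨(X k : A p n) ^ (d - 1), hmemV k⟩ : V)) := by
    apply LinearIndependent.of_comp (V.subtype)
    convert li
    rfl
  have hcard1 : Fintype.card (Fin n) ≤ Module.finrank (ZMod p) V :=
    livf.fintype_card_le_finrank
  have hcard2 : Module.finrank (ZMod p) V ≤ Fintype.card (Fin m) := by
    have h2 := finrank_range_le_card (R := ZMod p)
      (fun i : Fin m => (Lf p n (es i)) ^ (d - 1))
    rwa [Set.finrank] at h2
  rw [Fintype.card_fin] at hcard1 hcard2
  omega


instance : Module.Finite (ZMod p) (R p n) := by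
  classical
  refine ⟨⟨Finset.image (fun v : Fin n → Fin p =>
      pr p n (∏ k, X k ^ ((v k : ℕ)))) Finset.univ, ?_⟩⟩
  rw [Finset.coe_image, Finset.coe_univ, Set.image_univ, eq_top_iff]
  rintro r -
  obtain ⟨q, rfl⟩ := Ideal.Quotient.mk_surjective r
  have hq : (Ideal.Quotient.mk (Jid p n)) q
      = ∑ α ∈ q.support, (Ideal.Quotient.mk (Jid p n)) (monomial α (coeff α q)) := by
    conv_lhs => rw [as_sum q]
    rw [map_sum]
  rw [hq]
  apply Submodule.sum_mem
  intro α hα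
  by_cases hcase : ∀ k, α k < p
  · have hmon : monomial α (coeff α q) = C (coeff α q) * ∏ k, X k ^ (α k) := by
      rw [monomial_eq]
      congr 1
      exact Finsupp.prod_fintype _ _ (fun k => pow_zero _)
    have hv : (Ideal.Quotient.mk (Jid p n)) (monomial α (coeff α q))
        = (coeff α q) • pr p n (∏ k, X k ^ ((((fun k => (⟨α k, hcase k⟩ : Fin p)) : Fin n → Fin p) k : ℕ))) := by
      rw [hmon, ← smul_eq_C_mul]
      exact pr_smul p n _ _
    rw [hv]
    exact Submodule.smul_mem _ _ (Submodule.subset_span (Set.mem_range_self _))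
  · push_neg at hcase
    obtain ⟨k, hk⟩ := hcase
    have hsplit : α = Finsupp.single k p + (α - Finsupp.single k p) := by
      ext j
      rw [Finsupp.add_apply, Finsupp.tsub_apply]
      by_cases hj : j = k
      · subst hj; simp only [Finsupp.single_eq_same]; omega
      · simp [Finsupp.single_eq_of_ne' (Ne.symm hj)]
    have hzero : (Ideal.Quotient.mk (Jid p n)) (monomial α (coeff α q)) = 0 := by
      apply Ideal.Quotient.eq_zero_iff_mem.mpr
      rw [hsplit, monomial_single_add]
      exact Ideal.mul_mem_right _ _ (Ideal.pow_mem_pow (X_mem_Iaug p n k) p)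
    rw [hzero]
    exact Submodule.zero_mem _

lemma card_GU : ∃ k : ℕ, Nat.card (GU p n) = p ^ k := by
  haveI : Finite (R p n) := Module.finite_of_finite (ZMod p)
  haveI : Fintype (R p n) := Fintype.ofFinite _
  refine ⟨Module.finrank (ZMod p) (R p n) + n, ?_⟩
  have hequiv : GU p n ≃ (R p n) × (Fin n → ZMod p) :=
    ⟨fun u => (u.b, u.t), fun x => ⟨x.1, x.2⟩, fun u => rfl, fun x => rfl⟩
  rw [Nat.card_congr hequiv, Nat.card_prod]
  have h1 : Nat.card (R p n) = p ^ Module.finrank (ZMod p) (R p n) := by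
    rw [Nat.card_eq_fintype_card]
    have := Module.card_eq_pow_finrank (K := ZMod p) (V := R p n)
    rwa [ZMod.card] at this
  have h2 : Nat.card (Fin n → ZMod p) = p ^ n := by
    rw [Nat.card_eq_fintype_card, Fintype.card_fun, ZMod.card, Fintype.card_fin]
  rw [h1, h2, ← pow_add]


lemma emb_sum_mem {ι : Type} (H : Subgroup (GU p n)) (s : Finset ι) (r : ι → R p n)
    (h : ∀ i ∈ s, emb p n (r i) ∈ H) : emb p n (∑ i ∈ s, r i) ∈ H := by
  classical
  induction s using Finset.induction_on with
  | empty => rw [Finset.sum_empty, emb_one]; exact H.one_mem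
  | insert _ _ ha ih =>
    rename_i a s
    rw [Finset.sum_insert ha, ← emb_mul]
    exact H.mul_mem (h a (Finset.mem_insert_self a s))
      (ih (fun i hi => h i (Finset.mem_insert_of_mem hi)))

lemma block_pow (t : Fin n) :
    (⟨1, Pi.single t 1⟩ : GU p n) ^ p = emb p n (pr p n (X t ^ (p - 1))) := by
  rw [GU_pow_p]
  have hwu : wu p n (Pi.single t 1) = vu p n t := by
    rw [wu, Finset.prod_eq_single t]
    · rw [Pi.single_eq_same, ZMod.val_one, pow_one]
    · intro k _ hk
      rw [Pi.single_eq_of_ne hk, ZMod.val_zero, pow_zero]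
    · intro h; exact absurd (Finset.mem_univ t) h
  have hWf : Wf p n (Pi.single t 1) = 1 + xv p n t := by
    rw [Wf, hwu, vu_val]
  show (⟨(Wf p n (Pi.single t 1) - 1) ^ (p - 1) * 1, 0⟩ : GU p n) = _
  rw [hWf, emb]
  congr 1
  rw [add_sub_cancel_left, mul_one, xv, ← map_pow]

end
end AuxPG

/-- For every prime `p ≥ 3` and every `m ≥ 4` there is a finite `p`-group `U` whose
verbal subgroup `U^p` (generated by all `p`-th powers) is nontrivial, central, of
exponent `p`, and contains an element `g ≠ 1` such that no nontrivial element of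
`⟨g⟩` is a product of `m` `p`-th powers in `U`. -/
theorem exists_auxiliary_finite_p_group
    (p : ℕ) (hp : p.Prime) (hp3 : 3 ≤ p) (m : ℕ) (hm : 4 ≤ m) :
    ∃ (U : Type) (hU : Group U), haveI := hU;
      (∃ k : ℕ, Nat.card U = p ^ k) ∧
      (let Up : Subgroup U := Subgroup.closure {x : U | ∃ u : U, u ^ p = x};
        Up ≠ ⊥ ∧
        (∀ z ∈ Up, z ∈ Subgroup.center U) ∧
        (∀ z ∈ Up, z ^ p = 1) ∧
        (∃ g : U, g ∈ Up ∧ g ≠ 1 ∧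
          ∀ h ∈ Subgroup.zpowers g, h ≠ 1 →
            ¬ ∃ a : Fin m → U, h = (List.ofFn fun i => (a i) ^ p).prod)) := by
  haveI : Fact p.Prime := ⟨hp⟩
  set n := m + 1 with hn_def
  refine ⟨AuxPG.GU p n, inferInstance, AuxPG.card_GU p n, ?_⟩
  set T : Set (AuxPG.GU p n) := {x | ∃ u : AuxPG.GU p n, u ^ p = x} with hT_def
  set Up : Subgroup (AuxPG.GU p n) := Subgroup.closure T with hUp_def
  have hTZ0 : T ⊆ (AuxPG.Z0 p n : Set (AuxPG.GU p n)) := by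
    rintro x ⟨u, rfl⟩
    exact AuxPG.pow_p_mem_Z0 p n u
  have hUpZ0 : Up ≤ AuxPG.Z0 p n := (Subgroup.closure_le _).mpr hTZ0
  -- the element g
  set g : AuxPG.GU p n := AuxPG.emb p n (AuxPG.pr p n (AuxPG.Gt p n)) with hg_def
  have k0 : Fin n := ⟨0, by omega⟩
  have hgUp : g ∈ Up := by
    rw [hg_def, AuxPG.Gt, map_sum]
    apply AuxPG.emb_sum_mem
    intro t _
    apply Subgroup.subset_closure
    exact ⟨⟨1, Pi.single t 1⟩, AuxPG.block_pow p n t⟩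
  have hCGt : ∀ c : ZMod p, c ≠ 0 →
      AuxPG.pr p n (MvPolynomial.C c * AuxPG.Gt p n) ≠ 0 := by
    intro c hc hzero
    exact AuxPG.CGt_not_mem p n hc k0 (Ideal.Quotient.eq_zero_iff_mem.mp hzero)
  have hgne : g ≠ 1 := by
    intro h1
    rw [hg_def, ← AuxPG.emb_one] at h1
    have h2 := AuxPG.emb_inj p n h1
    apply hCGt 1 one_ne_zero
    rw [map_one, one_mul, h2]
  refine ⟨?_, ?_, ?_, g, hgUp, hgne, ?_⟩
  · -- Up ≠ ⊥
    intro hbot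
    rw [hbot, Subgroup.mem_bot] at hgUp
    exact hgne hgUp
  · intro z hz
    exact AuxPG.Z0_central p n z (hUpZ0 hz)
  · intro z hz
    exact AuxPG.Z0_pow_p p n z (hUpZ0 hz)
  · -- the width obstruction
    rintro h hmem hne ⟨a, haprod⟩
    obtain ⟨j, hj⟩ := Subgroup.mem_zpowers_iff.mp hmem
    set c : ZMod p := (j : ZMod p) with hc_def
    have hgj : g ^ j = AuxPG.emb p n (AuxPG.pr p n (MvPolynomial.C c * AuxPG.Gt p n)) := by
      rw [hg_def, AuxPG.emb_zpow]
      congr 1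
      rw [← Int.cast_smul_eq_zsmul (ZMod p), ← hc_def, ← AuxPG.pr_smul,
        MvPolynomial.smul_eq_C_mul]
    have hcne : c ≠ 0 := by
      intro hc0
      apply hne
      rw [← hj, hgj, hc0, map_zero, zero_mul, map_zero, AuxPG.emb_one]
    choose cs hcs using fun i : Fin m => AuxPG.pow_p_normal p n (a i)
    have hlist : (List.ofFn fun i => (a i) ^ p).prod
        = AuxPG.emb p n (∑ i, AuxPG.pr p n
            (MvPolynomial.C (cs i) * (AuxPG.Lf p n ((a i).t)) ^ (p - 1))) := by
      have h1 : (List.ofFn fun i => (a i) ^ p)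
          = (List.ofFn fun i => AuxPG.emb p n (AuxPG.pr p n
              (MvPolynomial.C (cs i) * (AuxPG.Lf p n ((a i).t)) ^ (p - 1)))) := by
        congr 1
        funext i
        exact hcs i
      rw [h1]
      have h2 : (fun i => AuxPG.emb p n (AuxPG.pr p n
              (MvPolynomial.C (cs i) * (AuxPG.Lf p n ((a i).t)) ^ (p - 1))))
          = (AuxPG.emb p n) ∘ (fun i => AuxPG.pr p n
              (MvPolynomial.C (cs i) * (AuxPG.Lf p n ((a i).t)) ^ (p - 1))) := rfl
      rw [h2, ← List.map_ofFn, AuxPG.list_map_emb_prod, List.sum_ofFn]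
    have hkey : AuxPG.pr p n (MvPolynomial.C c * AuxPG.Gt p n)
        = AuxPG.pr p n (∑ i, MvPolynomial.C (cs i) * (AuxPG.Lf p n ((a i).t)) ^ (p - 1)) := by
      apply AuxPG.emb_inj p n
      rw [← hgj, hj, haprod, hlist, map_sum]
    have hsub : MvPolynomial.C c * AuxPG.Gt p n
        - (∑ i, MvPolynomial.C (cs i) * (AuxPG.Lf p n ((a i).t)) ^ (p - 1))
        ∈ AuxPG.Jid p n := Ideal.Quotient.eq.mp hkey
    exact AuxPG.main_poly_lemma p n hp3 m hn_def hcne cs (fun i => (a i).t) hsub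
end

section
/- Let m and n be positive integers with gcd(m, n) = 1, and let G be a group. Then G satisfies (g^n h^n)^m = 1 for all g, h ∈ G if and only if G has a normal subgroup N with x^m = 1 for all x ∈ N such that every element of G/N has n-th power equal to the identity. Equivalently, all the identities of the product variety B_mB_n follow from the single identity (x₁^n x₂^n)^m = 1: the class of groups satisfying (x₁^n x₂^n)^m = 1 coincides with B_mB_n. -/
/-- For coprime positive integers `m` and `n`, a group `G` satisfies the single identity
`(x₁^n x₂^n)^m = 1` if and only if `G` belongs to the product variety `B_m B_n`, i.e.
`G` has a normal subgroup of exponent dividing `m` with quotient of exponent dividing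
`n`. -/
theorem BmBn_single_identity (m n : ℕ) (hm : 0 < m) (hn : 0 < n)
    (hco : Nat.gcd m n = 1) (G : Type) [Group G] :
    (∀ g h : G, (g ^ n * h ^ n) ^ m = 1) ↔
      ∃ N : Subgroup G, ∃ hN : N.Normal,
        (∀ x ∈ N, x ^ m = 1) ∧ (haveI := hN; ∀ x : G ⧸ N, x ^ n = 1) := by
  constructor
  · intro hid
    -- key: any element with x ^ m = 1 is an n-th power of such an element
    have key : ∀ x : G, x ^ m = 1 → ∃ y : G, y ^ n = x := by
      rcases eq_or_lt_of_le (show 1 ≤ m from hm) with hm1 | hm1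
      · intro x hx
        have : x = 1 := by simpa [← hm1] using hx
        exact ⟨1, by simp [this]⟩
      · obtain ⟨b, -, hb⟩ := Nat.exists_mul_mod_eq_one_of_coprime
          (Nat.coprime_comm.mp hco) hm1
        intro x hx
        refine ⟨x ^ b, ?_⟩
        have hdvd : orderOf x ∣ m := orderOf_dvd_of_pow_eq_one hx
        have : x ^ (b * n) = x ^ 1 := by
          apply pow_eq_pow_iff_modEq.mpr
          have h1 : n * b ≡ 1 [MOD m] := by
            unfold Nat.ModEq
            simpa [Nat.mod_eq_of_lt hm1] using hb
          exact ((Nat.mul_comm b n ▸ h1).of_dvd hdvd)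
        simpa [← pow_mul] using this
    set N : Subgroup G :=
      { carrier := {x : G | x ^ m = 1}
        one_mem' := one_pow m
        mul_mem' := by
          rintro x y (hx : x ^ m = 1) (hy : y ^ m = 1)
          obtain ⟨a, rfl⟩ := key x hx
          obtain ⟨b, rfl⟩ := key y hy
          exact hid a b
        inv_mem' := by
          rintro x (hx : x ^ m = 1)
          show (x⁻¹) ^ m = 1
          rw [inv_pow, hx, inv_one] } with hNdef
    have hN : N.Normal := by
      constructor
      rintro x (hx : x ^ m = 1) g
      show (g * x * g⁻¹) ^ m = 1
      rw [conj_pow, hx, mul_one, mul_inv_cancel]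
    refine ⟨N, hN, fun x hx => hx, ?_⟩
    intro x
    induction x using QuotientGroup.induction_on with
    | H g =>
      rw [← QuotientGroup.mk_pow]
      rw [QuotientGroup.eq_one_iff]
      show (g ^ n) ^ m = 1
      simpa using hid g 1
  · rintro ⟨N, hN, hNm, hQ⟩ g h
    have hg : g ^ n ∈ N := by
      rw [← QuotientGroup.eq_one_iff, QuotientGroup.mk_pow]
      exact hQ _
    have hh : h ^ n ∈ N := by
      rw [← QuotientGroup.eq_one_iff, QuotientGroup.mk_pow]
      exact hQ _
    exact hNm _ (N.mul_mem hg hh)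
end

section
/- For all positive integers k, c, and e, there exists a bound B = B(k, c, e) such that every group that is generated by at most k elements, is nilpotent of nilpotency class at most c, and has exponent dividing e (g^e = 1 for all its elements g), is finite of order at most B. -/
open Subgroup
open scoped commutatorElement

private lemma pow_mod_of_pow_eq_one {G : Type*} [Group G] {e : ℕ} {g : G}
    (hg : g ^ e = 1) (m : ℕ) : g ^ (m % e) = g ^ m := by
  conv_rhs => rw [← Nat.div_add_mod m e]
  rw [pow_add, pow_mul, hg, one_pow, one_mul]

private lemma abelian_bound (k e : ℕ) (he : 0 < e) (G : Type) [CommGroup G]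
    (hgen : ∃ s : Finset G, s.card ≤ k ∧ Subgroup.closure (s : Set G) = ⊤)
    (hexp : ∀ g : G, g ^ e = 1) : Finite G ∧ Nat.card G ≤ e ^ k := by
  obtain ⟨s, hsk, hs⟩ := hgen
  rcases eq_or_lt_of_le (show 1 ≤ e from he) with h1 | h1
  · have htriv : ∀ g : G, g = 1 := fun g => by
      have := hexp g; rwa [← h1, pow_one] at this
    haveI : Subsingleton G := ⟨fun a b => by rw [htriv a, htriv b]⟩
    refine ⟨inferInstance, ?_⟩
    have h2 : Nat.card G ≤ 1 := by
      have h3 := Nat.card_le_card_of_injective (fun _ : G => (0 : Fin 1))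
        (fun a b _ => Subsingleton.elim a b)
      simpa using h3
    exact le_trans h2 (Nat.one_le_iff_ne_zero.mpr (pow_ne_zero k he.ne'))
  · haveI : NeZero e := ⟨he.ne'⟩
    classical
    set f : (↥s → ZMod e) → G := fun x => ∏ i : ↥s, (i : G) ^ (x i).val with hf
    have hadd : ∀ x y : ↥s → ZMod e, f (x + y) = f x * f y := by
      intro x y
      rw [hf]
      simp only [Pi.add_apply]
      rw [← Finset.prod_mul_distrib]
      refine Finset.prod_congr rfl fun i _ => ?_
      rw [ZMod.val_add, pow_mod_of_pow_eq_one (hexp (i : G)), pow_add]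
    have hzero : f 0 = 1 := by rw [hf]; simp
    have hinv : ∀ x, f (-x) = (f x)⁻¹ := by
      intro x
      have h : f x * f (-x) = 1 := by
        rw [← hadd]; simpa using hzero
      exact eq_inv_of_mul_eq_one_right h
    let H : Subgroup G :=
      { carrier := Set.range f
        one_mem' := ⟨0, hzero⟩
        mul_mem' := by rintro a b ⟨x, rfl⟩ ⟨y, rfl⟩; exact ⟨x + y, hadd x y⟩
        inv_mem' := by rintro a ⟨x, rfl⟩; exact ⟨-x, hinv x⟩ }
    have hle : Subgroup.closure (s : Set G) ≤ H := by
      rw [Subgroup.closure_le]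
      intro g hg
      set x0 : ↥s → ZMod e := fun i => if i = (⟨g, hg⟩ : ↥s) then 1 else 0 with hx0
      refine ⟨x0, ?_⟩
      show (∏ i : ↥s, (i : G) ^ (x0 i).val) = g
      rw [Fintype.prod_eq_single (⟨g, hg⟩ : ↥s) (fun b hb => ?_)]
      · rw [hx0]
        simp [ZMod.val_one_eq_one_mod, Nat.mod_eq_of_lt h1]
      · rw [hx0]
        simp [if_neg hb]
    have hsurj : Function.Surjective f := by
      intro g
      exact hle (hs.symm ▸ Subgroup.mem_top g)
    refine ⟨Finite.of_surjective f hsurj, ?_⟩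
    calc Nat.card G ≤ Nat.card (↥s → ZMod e) := Nat.card_le_card_of_surjective f hsurj
    _ = e ^ s.card := by
        rw [Nat.card_eq_fintype_card, Fintype.card_fun, ZMod.card, Fintype.card_coe]
    _ ≤ e ^ k := Nat.pow_le_pow_right he hsk

private lemma lcs_map_eq {G H : Type} [Group G] [Group H] (f : G →* H)
    (hf : Function.Surjective f) (n : ℕ) :
    Subgroup.map f ((⊤ : Subgroup G).lowerCentralSeries n) = (⊤ : Subgroup H).lowerCentralSeries n := by
  induction n with
  | zero => simpa using Subgroup.map_top_of_surjective f hf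
  | succ n ih =>
    show Subgroup.map f ⁅(⊤ : Subgroup G).lowerCentralSeries n, ⊤⁆ = ⁅(⊤ : Subgroup H).lowerCentralSeries n, ⊤⁆
    rw [Subgroup.map_commutator, ih, Subgroup.map_top_of_surjective f hf]

private lemma commutator_central_left {G : Type} [Group G] (a b z : G)
    (hz : z ∈ Subgroup.center G) : ⁅a * z, b⁆ = ⁅a, b⁆ := by
  have hz1 : ∀ x : G, z * x * z⁻¹ = x := fun x => by
    rw [← Subgroup.mem_center_iff.mp hz x, mul_inv_cancel_right]
  have key : a * z * b * (a * z)⁻¹ = a * b * a⁻¹ := by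
    rw [mul_inv_rev]
    calc a * z * b * (z⁻¹ * a⁻¹) = a * (z * b * z⁻¹) * a⁻¹ := by group
    _ = a * b * a⁻¹ := by rw [hz1 b]
  rw [commutatorElement_def, commutatorElement_def, key]

private lemma commutator_central_right {G : Type} [Group G] (a b w : G)
    (hw : w ∈ Subgroup.center G) : ⁅a, b * w⁆ = ⁅a, b⁆ := by
  have hw1 : ∀ x : G, w * x * w⁻¹ = x := fun x => by
    rw [← Subgroup.mem_center_iff.mp hw x, mul_inv_cancel_right]
  have key : a * (b * w) * a⁻¹ * (b * w)⁻¹ = a * b * a⁻¹ * b⁻¹ := by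
    rw [mul_inv_rev]
    calc a * (b * w) * a⁻¹ * (w⁻¹ * b⁻¹) = a * b * (w * a⁻¹ * w⁻¹) * b⁻¹ := by group
    _ = a * b * a⁻¹ * b⁻¹ := by rw [hw1 a⁻¹]
  rw [commutatorElement_def, commutatorElement_def, key]

private lemma commutatorSet_bound (G : Type) [Group G]
    [Finite (G ⧸ Subgroup.center G)] :
    Finite (commutatorSet G) ∧
      Nat.card (commutatorSet G) ≤ Nat.card (G ⧸ Subgroup.center G) ^ 2 := by
  classical
  set Z := Subgroup.center G with hZ
  let q : (G ⧸ Z) × (G ⧸ Z) → commutatorSet G :=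
    fun p => ⟨⁅p.1.out, p.2.out⁆, commutator_mem_commutatorSet _ _⟩
  have hq : Function.Surjective q := by
    rintro ⟨x, g₁, g₂, rfl⟩
    refine ⟨(QuotientGroup.mk g₁, QuotientGroup.mk g₂), ?_⟩
    have hz : g₁⁻¹ * ((QuotientGroup.mk g₁ : G ⧸ Z).out) ∈ Z :=
      QuotientGroup.eq.mp (QuotientGroup.out_eq' (QuotientGroup.mk g₁ : G ⧸ Z)).symm
    have hw : g₂⁻¹ * ((QuotientGroup.mk g₂ : G ⧸ Z).out) ∈ Z :=
      QuotientGroup.eq.mp (QuotientGroup.out_eq' (QuotientGroup.mk g₂ : G ⧸ Z)).symm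
    apply Subtype.ext
    show ⁅(QuotientGroup.mk g₁ : G ⧸ Z).out, (QuotientGroup.mk g₂ : G ⧸ Z).out⁆ = ⁅g₁, g₂⁆
    have e1 : (QuotientGroup.mk g₁ : G ⧸ Z).out = g₁ * (g₁⁻¹ * (QuotientGroup.mk g₁ : G ⧸ Z).out) :=
      (mul_inv_cancel_left _ _).symm
    have e2 : (QuotientGroup.mk g₂ : G ⧸ Z).out = g₂ * (g₂⁻¹ * (QuotientGroup.mk g₂ : G ⧸ Z).out) :=
      (mul_inv_cancel_left _ _).symm
    rw [e1, e2, commutator_central_right _ _ _ hw, commutator_central_left _ _ _ hz]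
  refine ⟨Finite.of_surjective q hq, ?_⟩
  calc Nat.card (commutatorSet G) ≤ Nat.card ((G ⧸ Z) × (G ⧸ Z)) :=
        Nat.card_le_card_of_surjective q hq
  _ = Nat.card (G ⧸ Z) ^ 2 := by rw [Nat.card_prod, sq]

private lemma gens_map {G H : Type} [Group G] [Group H] (f : G →* H)
    (hf : Function.Surjective f) (k : ℕ)
    (h : ∃ s : Finset G, s.card ≤ k ∧ Subgroup.closure (s : Set G) = ⊤) :
    ∃ t : Finset H, t.card ≤ k ∧ Subgroup.closure (t : Set H) = ⊤ := by
  classical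
  obtain ⟨s, h1, h2⟩ := h
  refine ⟨s.image f, (Finset.card_image_le).trans h1, ?_⟩
  rw [Finset.coe_image, ← MonoidHom.map_closure, h2, Subgroup.map_top_of_surjective f hf]

private lemma aux_bound (k e : ℕ) (he : 0 < e) :
    ∀ c : ℕ, ∃ B : ℕ, ∀ (G : Type) [Group G],
      (∃ s : Finset G, s.card ≤ k ∧ Subgroup.closure (s : Set G) = ⊤) →
      (⊤ : Subgroup G).lowerCentralSeries (c + 1) = ⊥ →
      (∀ g : G, g ^ e = 1) →
      Finite G ∧ Nat.card G ≤ B := by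
  intro c
  induction c with
  | zero =>
    refine ⟨e ^ k, fun G _ hgen hbot hexp => ?_⟩
    have hcomm : ∀ a b : G, a * b = b * a := by
      intro a b
      have h1 : ⁅a, b⁆ ∈ (⊤ : Subgroup G).lowerCentralSeries 1 :=
        Subgroup.commutator_mem_commutator (Subgroup.mem_top a) (Subgroup.mem_top b)
      rw [hbot, Subgroup.mem_bot] at h1
      exact commutatorElement_eq_one_iff_mul_comm.mp h1
    letI : CommGroup G := { (inferInstance : Group G) with mul_comm := hcomm }
    exact abelian_bound k e he G hgen hexp
  | succ c ih =>
    obtain ⟨B, hB⟩ := ih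
    set S : ℕ := (Finset.range (B ^ 2 + 1)).sup Subgroup.cardCommutatorBound with hS
    refine ⟨e ^ k * S, fun G _ hgen hbot hexp => ?_⟩
    set Z := Subgroup.center G with hZ
    -- the (c+1)-st term is central
    have h1 : ⁅(⊤ : Subgroup G).lowerCentralSeries (c + 1), (⊤ : Subgroup G)⁆ = ⊥ := hbot
    have hcen : (⊤ : Subgroup G).lowerCentralSeries (c + 1) ≤ Z := by
      have h2 := Subgroup.commutator_eq_bot_iff_le_centralizer.mp h1
      rwa [Subgroup.coe_top, Subgroup.centralizer_univ] at h2
    -- the central quotient has class ≤ c+1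
    have hsurjZ : Function.Surjective (QuotientGroup.mk' Z) :=
      QuotientGroup.mk'_surjective Z
    have hmapZ : Subgroup.map (QuotientGroup.mk' Z) Z = ⊥ := by
      rw [eq_bot_iff]
      rintro x ⟨z, hz, rfl⟩
      simpa [Subgroup.mem_bot] using (QuotientGroup.eq_one_iff z).mpr hz
    have hQbot : (⊤ : Subgroup (G ⧸ Z)).lowerCentralSeries (c + 1) = ⊥ := by
      rw [← lcs_map_eq (QuotientGroup.mk' Z) hsurjZ, eq_bot_iff, ← hmapZ]
      exact Subgroup.map_mono hcen
    have hQexp : ∀ q : G ⧸ Z, q ^ e = 1 := by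
      rintro ⟨g⟩
      show (QuotientGroup.mk' Z g) ^ e = 1
      rw [← map_pow, hexp, map_one]
    obtain ⟨hQfin, hQcard⟩ :=
      hB (G ⧸ Z) (gens_map (QuotientGroup.mk' Z) hsurjZ k hgen) hQbot hQexp
    -- Schur: the commutator subgroup is finite of bounded order
    haveI : Finite (G ⧸ Z) := hQfin
    obtain ⟨hcsfin, hcscard⟩ := commutatorSet_bound G
    haveI : Finite (commutatorSet G) := hcsfin
    have hcomm_card : Nat.card (_root_.commutator G) ≤ S := by
      have h3 := Subgroup.card_commutator_le_of_finite_commutatorSet (G := G)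
      refine h3.trans (Finset.le_sup (Finset.mem_range.mpr (Nat.lt_succ_of_le ?_)))
      calc Nat.card (commutatorSet G) ≤ Nat.card (G ⧸ Z) ^ 2 := hcscard
      _ ≤ B ^ 2 := Nat.pow_le_pow_left hQcard 2
    haveI hcommfin : Finite (_root_.commutator G) := inferInstance
    -- the abelianization is finite of order ≤ e ^ k
    have hsurjA : Function.Surjective (Abelianization.of (G := G)) :=
      fun x => Quotient.inductionOn' x fun g => ⟨g, rfl⟩
    have hAexp : ∀ q : Abelianization G, q ^ e = 1 := by
      intro q
      obtain ⟨g, rfl⟩ := hsurjA q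
      rw [← map_pow, hexp, map_one]
    obtain ⟨hAfin, hAcard⟩ := abelian_bound k e he (Abelianization G)
      (gens_map Abelianization.of hsurjA k hgen) hAexp
    -- combine
    haveI : Finite (G ⧸ _root_.commutator G) := hAfin
    have hfin : Finite G :=
      Finite.of_equiv _ (Subgroup.groupEquivQuotientProdSubgroup
        (s := _root_.commutator G)).symm
    refine ⟨hfin, ?_⟩
    rw [Subgroup.card_eq_card_quotient_mul_card_subgroup (_root_.commutator G)]
    exact Nat.mul_le_mul hAcard hcomm_card

/-- For all positive integers `k`, `c`, `e` there is a bound `B` such that every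
`k`-generated group which is nilpotent of class at most `c` and has exponent dividing
`e` is finite of order at most `B`. -/
theorem bounded_order_of_nilpotent_bounded_exponent
    (k c e : ℕ) (hk : 0 < k) (hc : 0 < c) (he : 0 < e) :
    ∃ B : ℕ, ∀ (G : Type) [Group G],
      (∃ s : Finset G, s.card ≤ k ∧ Subgroup.closure (s : Set G) = ⊤) →
      (⊤ : Subgroup G).lowerCentralSeries c = ⊥ →
      (∀ g : G, g ^ e = 1) →
      Finite G ∧ Nat.card G ≤ B := by
  obtain ⟨c, rfl⟩ := Nat.exists_eq_add_of_le hc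
  simpa [Nat.add_comm] using aux_bound k e he c
end
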